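/- arXiv:1703.09616 — 5 statements merged into one kernel-verified Lean document; each statement's English description precedes it below -/
import Mathlib

section
/- For every integer n ≥ 8 with M = ⌊n/4⌋, every strategy S, and every i with 2 ≤ i ≤ M, the total weight increases by at least 4 when passing from p_S^i to p_S^{i−1}: ∑_{(x,y)∈ℤ²} p_S^{i−1}(x, y) ≥ 4 + ∑_{(x,y)∈ℤ²} p_S^i(x, y). -/
open Finset

/-- One step of the backward recursion for the catch probabilities: given the survivor's
position `c = (x_i, y_i)` in round `i` and the function `p_S^{i+1}`, produce `p_S^i`. -/
noncomputable def pstep (c : ℤ × ℤ) (f : ℤ × ℤ → ℝ) : ℤ × ℤ → ℝ :=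
  fun q =>
    if |q.1 - c.1| + |q.2 - c.2| ≤ 1 then 1
    else if q.1 ≠ c.1 ∧ q.2 ≠ c.2 then
      (f (q.1 + Int.sign (c.1 - q.1), q.2) + f (q.1, q.2 + Int.sign (c.2 - q.2))) / 2
    else if q.1 = c.1 then f (q.1, q.2 + Int.sign (c.2 - q.2))
    else f (q.1 + Int.sign (c.1 - q.1), q.2)

/-- `pAux S M j` is `p_S^{M-j}`: `pAux S M 0 = p_S^M` and each further step applies the
backward recursion centred at the survivor's position `S (M - (j+1))`. -/
noncomputable def pAux (S : ℕ → ℤ × ℤ) (M : ℕ) : ℕ → ℤ × ℤ → ℝ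
  | 0 => fun q => if |q.1 - (S M).1| + |q.2 - (S M).2| ≤ 1 then 1 else 0
  | j + 1 => pstep (S (M - (j + 1))) (pAux S M j)

/-- `pS S M i = p_S^i` (for `1 ≤ i ≤ M`). -/
noncomputable def pS (S : ℕ → ℤ × ℤ) (M : ℕ) (i : ℕ) : ℤ × ℤ → ℝ :=
  pAux S M (M - i)

/-- `t(S) = ∑_{(x,y) ∈ ℤ²} p_S(x,y)` where `p_S = p_S^1`. -/
noncomputable def tS (S : ℕ → ℤ × ℤ) (M : ℕ) : ℝ :=
  ∑ᶠ q : ℤ × ℤ, pS S M 1 q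

/-- A strategy for the first `M` moves: a sequence of vertices of `ℤ²`, consecutive ones at
distance at most `1`, finishing at `(0,0)`. -/
def IsStrategy (S : ℕ → ℤ × ℤ) (M : ℕ) : Prop :=
  S M = (0, 0) ∧
    ∀ i, 1 ≤ i → i < M → |(S (i + 1)).1 - (S i).1| + |(S (i + 1)).2 - (S i).2| ≤ 1

/-! ### Auxiliary lemmas -/

private lemma Icc_split3 (K : ℤ) (hK : 1 ≤ K) (h : ℤ → ℝ) :
    ∑ y ∈ Icc (-K) K, h y =
      (∑ y ∈ Icc (-K) (-1), h y) + h 0 + ∑ y ∈ Icc 1 K, h y := by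
  have e : Icc (-K) K = (Icc (-K) (-1) ∪ {0}) ∪ Icc 1 K := by
    ext z; simp only [Finset.mem_union, Finset.mem_Icc, Finset.mem_singleton]; omega
  rw [e, Finset.sum_union, Finset.sum_union, Finset.sum_singleton]
  · rw [Finset.disjoint_left]; intro a ha; simp only [Finset.mem_Icc, Finset.mem_singleton] at *; omega
  · rw [Finset.disjoint_left]; intro a ha hb
    simp only [Finset.mem_union, Finset.mem_Icc, Finset.mem_singleton] at *; omega

private lemma sum_reindex_add (a b c : ℤ) (h : ℤ → ℝ) :
    ∑ y ∈ Icc a b, h (y + c) = ∑ y ∈ Icc (a + c) (b + c), h y := by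
  rw [← Finset.map_add_right_Icc, Finset.sum_map]; rfl

private lemma sum_reindex_sub (a b c : ℤ) (h : ℤ → ℝ) :
    ∑ y ∈ Icc a b, h (y - c) = ∑ y ∈ Icc (a - c) (b - c), h y := by
  have := sum_reindex_add a b (-c) h
  simp only [← sub_eq_add_neg] at this; exact this

private lemma sum_Icc_ext_top (a b b' : ℤ) (hb : b ≤ b') (h : ℤ → ℝ)
    (hz : ∀ y, b < y → h y = 0) :
    ∑ y ∈ Icc a b, h y = ∑ y ∈ Icc a b', h y := by
  refine Finset.sum_subset (Finset.Icc_subset_Icc_right hb) ?_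
  intro y hy hy2
  simp only [Finset.mem_Icc] at hy hy2
  exact hz y (by omega)

private lemma sum_Icc_ext_bot (a a' b : ℤ) (ha : a' ≤ a) (h : ℤ → ℝ)
    (hz : ∀ y, y < a → h y = 0) :
    ∑ y ∈ Icc a b, h y = ∑ y ∈ Icc a' b, h y := by
  refine Finset.sum_subset (Finset.Icc_subset_Icc_left ha) ?_
  intro y hy hy2
  simp only [Finset.mem_Icc] at hy hy2
  exact hz y (by omega)

private lemma sum_Icc_pop_bot (a b : ℤ) (hab : a ≤ b) (h : ℤ → ℝ) :
    ∑ y ∈ Icc a b, h y = h a + ∑ y ∈ Icc (a + 1) b, h y := by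
  rw [show Icc a b = insert a (Icc (a+1) b) by
        ext z; simp only [Finset.mem_Icc, Finset.mem_insert]; omega,
    Finset.sum_insert (by simp only [Finset.mem_Icc]; omega)]

private lemma sum_Icc_pop_top (a b : ℤ) (hab : a ≤ b) (h : ℤ → ℝ) :
    ∑ y ∈ Icc a b, h y = (∑ y ∈ Icc a (b - 1), h y) + h b := by
  rw [show Icc a b = insert b (Icc a (b-1)) by
        ext z; simp only [Finset.mem_Icc, Finset.mem_insert]; omega,
    Finset.sum_insert (by simp only [Finset.mem_Icc]; omega)]
  ring

private lemma pstep_nonneg (c : ℤ × ℤ) (f : ℤ × ℤ → ℝ) (hf : ∀ q, 0 ≤ f q) (q : ℤ × ℤ) :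
    0 ≤ pstep c f q := by
  unfold pstep
  split_ifs
  · norm_num
  · have := hf (q.1 + Int.sign (c.1 - q.1), q.2)
    have := hf (q.1, q.2 + Int.sign (c.2 - q.2))
    linarith
  · exact hf _
  · exact hf _

private lemma pstep_le_one (c : ℤ × ℤ) (f : ℤ × ℤ → ℝ) (hf : ∀ q, f q ≤ 1) (q : ℤ × ℤ) :
    pstep c f q ≤ 1 := by
  unfold pstep
  split_ifs
  · norm_num
  · have := hf (q.1 + Int.sign (c.1 - q.1), q.2)
    have := hf (q.1, q.2 + Int.sign (c.2 - q.2))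
    linarith
  · exact hf _
  · exact hf _

private lemma sign_cases (a : ℤ) : a.sign = -1 ∨ a.sign = 0 ∨ a.sign = 1 := by
  rcases lt_trichotomy a 0 with h | h | h
  · exact Or.inl (Int.sign_eq_neg_one_of_neg h)
  · exact Or.inr (Or.inl (by rw [h]; rfl))
  · exact Or.inr (Or.inr (Int.sign_eq_one_of_pos h))

private lemma abs_sign_le (a : ℤ) : |a.sign| ≤ 1 := by
  rcases sign_cases a with h | h | h <;> rw [h] <;> norm_num

private lemma diamond_finite (c : ℤ × ℤ) :
    ({q : ℤ × ℤ | |q.1 - c.1| + |q.2 - c.2| ≤ 1} : Set (ℤ × ℤ)).Finite := by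
  apply Set.Finite.subset (Set.finite_Icc (c.1 - 1, c.2 - 1) (c.1 + 1, c.2 + 1))
  intro q hq
  simp only [Set.mem_setOf_eq] at hq
  have h1 : |q.1 - c.1| ≤ 1 := by linarith [abs_nonneg (q.2 - c.2)]
  have h2 : |q.2 - c.2| ≤ 1 := by linarith [abs_nonneg (q.1 - c.1)]
  rw [abs_le] at h1 h2
  simp only [Set.mem_Icc, Prod.le_def]
  omega

private lemma pstep_support_finite (c : ℤ × ℤ) (f : ℤ × ℤ → ℝ)
    (hf : (Function.support f).Finite) :
    (Function.support (pstep c f)).Finite := by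
  have hD := diamond_finite c
  have himg : ∀ v : ℤ × ℤ, ((fun p : ℤ × ℤ => p + v) '' Function.support f).Finite :=
    fun v => hf.image _
  apply Set.Finite.subset
    (((((hD.union (himg (1,0))).union (himg (-1,0))).union (himg (0,1))).union
      (himg (0,-1))).union hf)
  intro q hq
  by_cases hD1 : |q.1 - c.1| + |q.2 - c.2| ≤ 1
  · simp only [Set.mem_union]; tauto
  have key : (∃ s : ℤ, |s| ≤ 1 ∧ f (q.1 + s, q.2) ≠ 0) ∨
      (∃ s : ℤ, |s| ≤ 1 ∧ f (q.1, q.2 + s) ≠ 0) := by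
    have hq' : pstep c f q ≠ 0 := hq
    unfold pstep at hq'
    rw [if_neg hD1] at hq'
    have hs1 := sign_cases (c.1 - q.1)
    have hs2 := sign_cases (c.2 - q.2)
    split_ifs at hq' with h1 h2
    · by_cases hx : f (q.1 + Int.sign (c.1 - q.1), q.2) = 0
      · right; exact ⟨(c.2 - q.2).sign, by rcases hs2 with h|h|h <;> simp [h],
          by intro h0; rw [hx, h0] at hq'; norm_num at hq'⟩
      · left; exact ⟨(c.1 - q.1).sign, by rcases hs1 with h|h|h <;> simp [h], hx⟩
    · right; exact ⟨(c.2 - q.2).sign, by rcases hs2 with h|h|h <;> simp [h], hq'⟩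
    · left; exact ⟨(c.1 - q.1).sign, by rcases hs1 with h|h|h <;> simp [h], hq'⟩
  simp only [Set.mem_union]
  rcases key with ⟨s, hs, hval⟩ | ⟨s, hs, hval⟩ <;> obtain ⟨hs1, hs2⟩ := abs_le.mp hs
  · interval_cases s
    · left; left; left; left; simp only [Set.mem_image]
      exact Or.inr ⟨(q.1 + -1, q.2), hval, by simp [Prod.ext_iff]⟩
    · right; simpa using hval
    · left; left; left; simp only [Set.mem_image]
      exact Or.inr ⟨(q.1 + 1, q.2), hval, by simp [Prod.ext_iff]⟩
  · interval_cases s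
    · left; left; simp only [Set.mem_image]
      exact Or.inr ⟨(q.1, q.2 + -1), hval, by simp [Prod.ext_iff]⟩
    · right; simpa using hval
    · left; simp only [Set.mem_image]
      exact Or.inr ⟨(q.1, q.2 + 1), hval, by simp [Prod.ext_iff]⟩

private lemma pstep_translate (c : ℤ × ℤ) (f : ℤ × ℤ → ℝ) (q : ℤ × ℤ) :
    pstep c f q = pstep (0, 0) (fun p => f (p + c)) (q - c) := by
  unfold pstep
  simp only [Prod.fst_sub, Prod.snd_sub, sub_zero]
  rw [show (0:ℤ) - (q.1 - c.1) = c.1 - q.1 by ring, show (0:ℤ) - (q.2 - c.2) = c.2 - q.2 by ring]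
  have a1 : (q.1 - c.1 + (c.1 - q.1).sign, q.2 - c.2) + c = (q.1 + (c.1 - q.1).sign, q.2) := by
    ext <;> simp <;> ring
  have a2 : (q.1 - c.1, q.2 - c.2 + (c.2 - q.2).sign) + c = (q.1, q.2 + (c.2 - q.2).sign) := by
    ext <;> simp <;> ring
  rw [a1, a2]
  simp only [sub_ne_zero, sub_eq_zero]

/-! ### Evaluation lemmas for `pstep` centred at the origin -/

private lemma pstep0_diamond (g : ℤ × ℤ → ℝ) (x y : ℤ) (h : |x| + |y| ≤ 1) :
    pstep (0, 0) g (x, y) = 1 := by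
  unfold pstep
  simp only [sub_zero]
  rw [if_pos h]

private lemma pstep0_quad (g : ℤ × ℤ → ℝ) (x y : ℤ) (hx : x ≠ 0) (hy : y ≠ 0)
    (hd : ¬(|x| + |y| ≤ 1)) :
    pstep (0, 0) g (x, y) = (g (x + (0 - x).sign, y) + g (x, y + (0 - y).sign)) / 2 := by
  unfold pstep
  simp only [sub_zero]
  rw [if_neg hd, if_pos ⟨hx, hy⟩]

private lemma pstep0_x0 (g : ℤ × ℤ → ℝ) (y : ℤ) (hy : 2 ≤ |y|) :
    pstep (0, 0) g (0, y) = g (0, y + (0 - y).sign) := by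
  unfold pstep
  simp only [sub_zero]
  rw [if_neg (by simp; omega), if_neg (by simp)]
  simp

private lemma pstep0_y0 (g : ℤ × ℤ → ℝ) (x : ℤ) (hx : 2 ≤ |x|) :
    pstep (0, 0) g (x, 0) = g (x + (0 - x).sign, 0) := by
  unfold pstep
  simp only [sub_zero]
  have hx0 : ¬(x = 0) := by rintro rfl; simp at hx
  rw [if_neg (by simp; omega), if_neg (by simp), if_neg hx0]

/-! ### The central inequality, centred at the origin -/

private lemma key0 (g : ℤ × ℤ → ℝ) (N : ℤ) (hN : 1 ≤ N)
    (hsupp : ∀ q : ℤ × ℤ, g q ≠ 0 → |q.1| ≤ N ∧ |q.2| ≤ N)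
    (h0 : ∀ q, 0 ≤ g q) (h1 : ∀ q, g q ≤ 1) :
    4 + ∑ᶠ q : ℤ × ℤ, g q ≤ ∑ᶠ q : ℤ × ℤ, pstep (0, 0) g q := by
  set K : ℤ := N + 2 with hK
  have hK1 : (1 : ℤ) ≤ K := by omega
  -- vanishing outside the support box
  have hz : ∀ x y : ℤ, (N < |x| ∨ N < |y|) → g (x, y) = 0 := by
    intro x y h
    by_contra hne
    obtain ⟨u1, u2⟩ := hsupp (x, y) hne
    rcases h with h | h <;> simp at u1 u2 <;> linarith
  have habs : ∀ x : ℤ, K - 1 ≤ x → N < |x| := by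
    intro x hx; rw [abs_of_pos (by omega)]; omega
  have habs' : ∀ x : ℤ, x ≤ -(K - 1) → N < |x| := by
    intro x hx; rw [abs_of_neg (by omega)]; omega
  -- row lemma, positive side
  have rowpos : ∀ x : ℤ, 1 ≤ x →
      ∑ y ∈ Icc (-K) K, pstep (0, 0) g (x, y)
        = ((∑ y ∈ Icc (-K) K, g (x - 1, y)) + ∑ y ∈ Icc (-K) K, g (x, y)) / 2
          + (g (x - 1, 0) + g (x, 0)) / 2 + (if x = 1 then 1 - g (0, 0) else 0) := by
    intro x hx
    have hsx : (0 - x).sign = -1 := Int.sign_eq_neg_one_of_neg (by omega)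
    have hxabs : |x| = x := abs_of_pos (by omega)
    have A1 : ∑ y ∈ Icc 1 K, pstep (0, 0) g (x, y)
        = ((∑ y ∈ Icc 1 K, g (x - 1, y)) + (g (x, 0) + ∑ y ∈ Icc 1 K, g (x, y))) / 2 := by
      rw [Finset.sum_congr rfl (fun y hy => by
        simp only [mem_Icc] at hy
        have hsy : (0 - y).sign = -1 := Int.sign_eq_neg_one_of_neg (by omega)
        rw [pstep0_quad g x y (by omega) (by omega)
          (by rw [hxabs, abs_of_pos (by omega : (0:ℤ) < y)]; omega), hsx, hsy,
          show x + (-1 : ℤ) = x - 1 by ring] : ∀ y ∈ Icc 1 K, _ = (g (x - 1, y) + g (x, y + (-1))) / 2)]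
      rw [← Finset.sum_div, Finset.sum_add_distrib]
      congr 2
      rw [sum_reindex_add 1 K (-1) (fun y => g (x, y)),
        show (1 : ℤ) + -1 = 0 by ring, show K + -1 = K - 1 by ring,
        sum_Icc_pop_bot 0 (K - 1) (by omega), show (0 : ℤ) + 1 = 1 by ring,
        sum_Icc_ext_top 1 (K - 1) K (by omega) _
          (fun y hy => hz x y (Or.inr (habs y (by omega))))]
    have A2 : ∑ y ∈ Icc (-K) (-1), pstep (0, 0) g (x, y)
        = ((∑ y ∈ Icc (-K) (-1), g (x - 1, y)) + ((∑ y ∈ Icc (-K) (-1), g (x, y)) + g (x, 0))) / 2 := by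
      rw [Finset.sum_congr rfl (fun y hy => by
        simp only [mem_Icc] at hy
        have hsy : (0 - y).sign = 1 := Int.sign_eq_one_of_pos (by omega)
        rw [pstep0_quad g x y (by omega) (by omega)
          (by rw [hxabs, abs_of_neg (by omega : y < (0:ℤ))]; omega), hsx, hsy,
          show x + (-1 : ℤ) = x - 1 by ring] : ∀ y ∈ Icc (-K) (-1), _ = (g (x - 1, y) + g (x, y + 1)) / 2)]
      rw [← Finset.sum_div, Finset.sum_add_distrib]
      congr 2
      rw [sum_reindex_add (-K) (-1) 1 (fun y => g (x, y)),
        show (-1 : ℤ) + 1 = 0 by ring,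
        sum_Icc_pop_top (-K + 1) 0 (by omega), show (0 : ℤ) - 1 = -1 by ring,
        sum_Icc_ext_bot (-K + 1) (-K) (-1) (by omega) _
          (fun y hy => hz x y (Or.inr (habs' y (by omega))))]
    have A0 : pstep (0, 0) g (x, 0) = (if x = 1 then 1 else 0) + (if x = 1 then 0 else g (x - 1, 0)) := by
      by_cases hx1 : x = 1
      · subst hx1
        rw [pstep0_diamond g 1 0 (by norm_num)]
        simp
      · rw [pstep0_y0 g x (by omega), hsx, show x + (-1 : ℤ) = x - 1 by ring]
        simp [hx1]
    rw [Icc_split3 K hK1 (fun y => pstep (0, 0) g (x, y)), A0, A1, A2,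
      Icc_split3 K hK1 (fun y => g (x - 1, y)), Icc_split3 K hK1 (fun y => g (x, y))]
    by_cases hx1 : x = 1 <;> simp [hx1] <;> ring
  -- row lemma, negative side
  have rowneg : ∀ x : ℤ, x ≤ -1 →
      ∑ y ∈ Icc (-K) K, pstep (0, 0) g (x, y)
        = ((∑ y ∈ Icc (-K) K, g (x + 1, y)) + ∑ y ∈ Icc (-K) K, g (x, y)) / 2
          + (g (x + 1, 0) + g (x, 0)) / 2 + (if x = -1 then 1 - g (0, 0) else 0) := by
    intro x hx
    have hsx : (0 - x).sign = 1 := Int.sign_eq_one_of_pos (by omega)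
    have hxabs : |x| = -x := abs_of_neg (by omega)
    have A1 : ∑ y ∈ Icc 1 K, pstep (0, 0) g (x, y)
        = ((∑ y ∈ Icc 1 K, g (x + 1, y)) + (g (x, 0) + ∑ y ∈ Icc 1 K, g (x, y))) / 2 := by
      rw [Finset.sum_congr rfl (fun y hy => by
        simp only [mem_Icc] at hy
        have hsy : (0 - y).sign = -1 := Int.sign_eq_neg_one_of_neg (by omega)
        rw [pstep0_quad g x y (by omega) (by omega)
          (by rw [hxabs, abs_of_pos (by omega : (0:ℤ) < y)]; omega), hsx, hsy]
          : ∀ y ∈ Icc 1 K, _ = (g (x + 1, y) + g (x, y + (-1))) / 2)]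
      rw [← Finset.sum_div, Finset.sum_add_distrib]
      congr 2
      rw [sum_reindex_add 1 K (-1) (fun y => g (x, y)),
        show (1 : ℤ) + -1 = 0 by ring, show K + -1 = K - 1 by ring,
        sum_Icc_pop_bot 0 (K - 1) (by omega), show (0 : ℤ) + 1 = 1 by ring,
        sum_Icc_ext_top 1 (K - 1) K (by omega) _
          (fun y hy => hz x y (Or.inr (habs y (by omega))))]
    have A2 : ∑ y ∈ Icc (-K) (-1), pstep (0, 0) g (x, y)
        = ((∑ y ∈ Icc (-K) (-1), g (x + 1, y)) + ((∑ y ∈ Icc (-K) (-1), g (x, y)) + g (x, 0))) / 2 := by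
      rw [Finset.sum_congr rfl (fun y hy => by
        simp only [mem_Icc] at hy
        have hsy : (0 - y).sign = 1 := Int.sign_eq_one_of_pos (by omega)
        rw [pstep0_quad g x y (by omega) (by omega)
          (by rw [hxabs, abs_of_neg (by omega : y < (0:ℤ))]; omega), hsx, hsy]
          : ∀ y ∈ Icc (-K) (-1), _ = (g (x + 1, y) + g (x, y + 1)) / 2)]
      rw [← Finset.sum_div, Finset.sum_add_distrib]
      congr 2
      rw [sum_reindex_add (-K) (-1) 1 (fun y => g (x, y)),
        show (-1 : ℤ) + 1 = 0 by ring,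
        sum_Icc_pop_top (-K + 1) 0 (by omega), show (0 : ℤ) - 1 = -1 by ring,
        sum_Icc_ext_bot (-K + 1) (-K) (-1) (by omega) _
          (fun y hy => hz x y (Or.inr (habs' y (by omega))))]
    have A0 : pstep (0, 0) g (x, 0) = (if x = -1 then 1 else 0) + (if x = -1 then 0 else g (x + 1, 0)) := by
      by_cases hx1 : x = -1
      · subst hx1
        rw [pstep0_diamond g (-1) 0 (by norm_num)]
        simp
      · rw [pstep0_y0 g x (by rw [hxabs]; omega), hsx]
        simp [hx1]
    rw [Icc_split3 K hK1 (fun y => pstep (0, 0) g (x, y)), A0, A1, A2,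
      Icc_split3 K hK1 (fun y => g (x + 1, y)), Icc_split3 K hK1 (fun y => g (x, y))]
    by_cases hx1 : x = -1 <;> simp [hx1] <;> ring
  -- row lemma at x = 0
  have row0 : ∑ y ∈ Icc (-K) K, pstep (0, 0) g (0, y)
      = (∑ y ∈ Icc (-K) K, g (0, y)) - g (0, 0) + 3 := by
    have B1 : ∑ y ∈ Icc 1 K, pstep (0, 0) g (0, y) = 1 + ∑ y ∈ Icc 1 K, g (0, y) - g (0, K) := by
      rw [sum_Icc_pop_bot 1 K (by omega), pstep0_diamond g 0 1 (by norm_num),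
        show (1:ℤ) + 1 = 2 by norm_num]
      rw [Finset.sum_congr rfl (fun y hy => by
        simp only [mem_Icc] at hy
        have hsy : (0 - y).sign = -1 := Int.sign_eq_neg_one_of_neg (by omega)
        rw [pstep0_x0 g y (by rw [abs_of_pos (by omega : (0:ℤ) < y)]; omega), hsy]
          : ∀ y ∈ Icc 2 K, _ = g (0, y + (-1)))]
      rw [sum_reindex_add 2 K (-1) (fun y => g (0, y)),
        show (2 : ℤ) + -1 = 1 by ring, show K + -1 = K - 1 by ring]
      rw [sum_Icc_pop_top 1 K (by omega) (fun y => g (0, y))]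
      ring
    have B2 : ∑ y ∈ Icc (-K) (-1), pstep (0, 0) g (0, y)
        = 1 + ∑ y ∈ Icc (-K) (-1), g (0, y) - g (0, -K) := by
      rw [sum_Icc_pop_top (-K) (-1) (by omega), pstep0_diamond g 0 (-1) (by norm_num),
        show (-1:ℤ) - 1 = -2 by norm_num]
      rw [Finset.sum_congr rfl (fun y hy => by
        simp only [mem_Icc] at hy
        have hsy : (0 - y).sign = 1 := Int.sign_eq_one_of_pos (by omega)
        rw [pstep0_x0 g y (by rw [abs_of_neg (by omega : y < (0:ℤ))]; omega), hsy]
          : ∀ y ∈ Icc (-K) (-2), _ = g (0, y + 1))]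
      rw [sum_reindex_add (-K) (-2) 1 (fun y => g (0, y)),
        show (-2 : ℤ) + 1 = -1 by ring]
      rw [sum_Icc_pop_bot (-K) (-1) (by omega) (fun y => g (0, y))]
      ring
    have hgk : g (0, K) = 0 := hz 0 K (Or.inr (habs K (by omega)))
    have hgk' : g (0, -K) = 0 := hz 0 (-K) (Or.inr (habs' (-K) (by omega)))
    rw [Icc_split3 K hK1 (fun y => pstep (0, 0) g (0, y)), B1, B2,
      pstep0_diamond g 0 0 (by norm_num),
      Icc_split3 K hK1 (fun y => g (0, y)), hgk, hgk']
    ring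
  -- boxes
  have psbound : ∀ q : ℤ × ℤ, pstep (0, 0) g q ≠ 0 → q ∈ Icc (-K) K ×ˢ Icc (-K) K := by
    intro q hq
    simp only [Finset.mem_product, Finset.mem_Icc]
    by_cases hD1 : |q.1 - (0:ℤ)| + |q.2 - (0:ℤ)| ≤ 1
    · simp only [sub_zero] at hD1
      have u1 : |q.1| ≤ 1 := by linarith [abs_nonneg q.2]
      have u2 : |q.2| ≤ 1 := by linarith [abs_nonneg q.1]
      rw [abs_le] at u1 u2
      omega
    · have key : (∃ s : ℤ, |s| ≤ 1 ∧ g (q.1 + s, q.2) ≠ 0) ∨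
          (∃ s : ℤ, |s| ≤ 1 ∧ g (q.1, q.2 + s) ≠ 0) := by
        unfold pstep at hq
        rw [if_neg hD1] at hq
        have hs1 := sign_cases ((0:ℤ) - q.1)
        have hs2 := sign_cases ((0:ℤ) - q.2)
        split_ifs at hq with h1 h2
        · by_cases hx : g (q.1 + Int.sign (0 - q.1), q.2) = 0
          · right; exact ⟨(0 - q.2).sign, abs_sign_le _,
              by intro h0; rw [hx, h0] at hq; norm_num at hq⟩
          · left; exact ⟨(0 - q.1).sign, abs_sign_le _, hx⟩
        · right; exact ⟨(0 - q.2).sign, abs_sign_le _, hq⟩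
        · left; exact ⟨(0 - q.1).sign, abs_sign_le _, hq⟩
      rcases key with ⟨s, hs, hval⟩ | ⟨s, hs, hval⟩ <;>
        obtain ⟨u1, u2⟩ := hsupp _ hval <;>
        rw [abs_le] at u1 u2 hs <;> simp only [] at u1 u2 <;> omega
  have gbound : ∀ q : ℤ × ℤ, g q ≠ 0 → q ∈ Icc (-K) K ×ˢ Icc (-K) K := by
    intro q hq
    obtain ⟨u1, u2⟩ := hsupp q hq
    rw [abs_le] at u1 u2
    simp only [Finset.mem_product, Finset.mem_Icc]
    omega
  have epst : ∑ᶠ q : ℤ × ℤ, pstep (0, 0) g q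
      = ∑ x ∈ Icc (-K) K, ∑ y ∈ Icc (-K) K, pstep (0, 0) g (x, y) := by
    rw [finsum_eq_sum_of_support_subset _ (s := Icc (-K) K ×ˢ Icc (-K) K)
      (fun q hq => psbound q hq), Finset.sum_product]
  have eg : ∑ᶠ q : ℤ × ℤ, g q = ∑ x ∈ Icc (-K) K, ∑ y ∈ Icc (-K) K, g (x, y) := by
    rw [finsum_eq_sum_of_support_subset _ (s := Icc (-K) K ×ˢ Icc (-K) K)
      (fun q hq => gbound q hq), Finset.sum_product]
  -- column sums vanish at the extremes
  have colzero_top : ∀ x : ℤ, K - 1 < x → (∑ y ∈ Icc (-K) K, g (x, y)) = 0 :=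
    fun x hx => Finset.sum_eq_zero (fun y _ => hz x y (Or.inl (habs x (by omega))))
  have colzero_bot : ∀ x : ℤ, x < -(K - 1) → (∑ y ∈ Icc (-K) K, g (x, y)) = 0 :=
    fun x hx => Finset.sum_eq_zero (fun y _ => hz x y (Or.inl (habs' x (by omega))))
  have axzero_top : ∀ x : ℤ, K - 1 < x → g (x, 0) = 0 :=
    fun x hx => hz x 0 (Or.inl (habs x (by omega)))
  have axzero_bot : ∀ x : ℤ, x < -(K - 1) → g (x, 0) = 0 :=
    fun x hx => hz x 0 (Or.inl (habs' x (by omega)))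
  -- positive part total
  have postotal : ∑ x ∈ Icc 1 K, ∑ y ∈ Icc (-K) K, pstep (0, 0) g (x, y)
      = (∑ x ∈ Icc 1 K, ∑ y ∈ Icc (-K) K, g (x, y)) + (∑ y ∈ Icc (-K) K, g (0, y)) / 2
        + (∑ x ∈ Icc 1 K, g (x, 0)) + g (0, 0) / 2 + (1 - g (0, 0)) := by
    rw [Finset.sum_congr rfl (fun x hx => rowpos x (by simp only [mem_Icc] at hx; omega))]
    rw [Finset.sum_add_distrib, Finset.sum_add_distrib, ← Finset.sum_div, ← Finset.sum_div,
      Finset.sum_add_distrib, Finset.sum_add_distrib]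
    have t1 : ∑ x ∈ Icc 1 K, (∑ y ∈ Icc (-K) K, g (x - 1, y))
        = (∑ y ∈ Icc (-K) K, g (0, y)) + ∑ x ∈ Icc 1 K, ∑ y ∈ Icc (-K) K, g (x, y) := by
      rw [sum_reindex_sub 1 K 1 (fun x => ∑ y ∈ Icc (-K) K, g (x, y)),
        show (1:ℤ) - 1 = 0 by ring,
        sum_Icc_pop_bot 0 (K - 1) (by omega), show (0:ℤ) + 1 = 1 by ring,
        sum_Icc_ext_top 1 (K - 1) K (by omega) _ (fun x hx => colzero_top x hx)]
    have t2 : ∑ x ∈ Icc 1 K, g (x - 1, 0) = g (0, 0) + ∑ x ∈ Icc 1 K, g (x, 0) := by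
      rw [sum_reindex_sub 1 K 1 (fun x => g (x, 0)),
        show (1:ℤ) - 1 = 0 by ring,
        sum_Icc_pop_bot 0 (K - 1) (by omega), show (0:ℤ) + 1 = 1 by ring,
        sum_Icc_ext_top 1 (K - 1) K (by omega) _ (fun x hx => axzero_top x hx)]
    have t3 : ∑ x ∈ Icc 1 K, (if x = 1 then 1 - g (0, 0) else 0) = 1 - g (0, 0) := by
      rw [Finset.sum_ite_eq' (Icc 1 K) 1 (fun _ => 1 - g (0, 0))]
      simp only [mem_Icc]
      rw [if_pos ⟨le_refl 1, by omega⟩]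
    rw [t1, t2, t3]
    ring
  -- negative part total
  have negtotal : ∑ x ∈ Icc (-K) (-1), ∑ y ∈ Icc (-K) K, pstep (0, 0) g (x, y)
      = (∑ x ∈ Icc (-K) (-1), ∑ y ∈ Icc (-K) K, g (x, y)) + (∑ y ∈ Icc (-K) K, g (0, y)) / 2
        + (∑ x ∈ Icc (-K) (-1), g (x, 0)) + g (0, 0) / 2 + (1 - g (0, 0)) := by
    rw [Finset.sum_congr rfl (fun x hx => rowneg x (by simp only [mem_Icc] at hx; omega))]
    rw [Finset.sum_add_distrib, Finset.sum_add_distrib, ← Finset.sum_div, ← Finset.sum_div,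
      Finset.sum_add_distrib, Finset.sum_add_distrib]
    have t1 : ∑ x ∈ Icc (-K) (-1), (∑ y ∈ Icc (-K) K, g (x + 1, y))
        = (∑ y ∈ Icc (-K) K, g (0, y)) + ∑ x ∈ Icc (-K) (-1), ∑ y ∈ Icc (-K) K, g (x, y) := by
      rw [sum_reindex_add (-K) (-1) 1 (fun x => ∑ y ∈ Icc (-K) K, g (x, y)),
        show (-1:ℤ) + 1 = 0 by ring,
        sum_Icc_pop_top (-K + 1) 0 (by omega), show (0:ℤ) - 1 = -1 by ring,
        sum_Icc_ext_bot (-K + 1) (-K) (-1) (by omega) _ (fun x hx => colzero_bot x (by omega))]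
      ring
    have t2 : ∑ x ∈ Icc (-K) (-1), g (x + 1, 0) = g (0, 0) + ∑ x ∈ Icc (-K) (-1), g (x, 0) := by
      rw [sum_reindex_add (-K) (-1) 1 (fun x => g (x, 0)),
        show (-1:ℤ) + 1 = 0 by ring,
        sum_Icc_pop_top (-K + 1) 0 (by omega), show (0:ℤ) - 1 = -1 by ring,
        sum_Icc_ext_bot (-K + 1) (-K) (-1) (by omega) _ (fun x hx => axzero_bot x (by omega))]
      ring
    have t3 : ∑ x ∈ Icc (-K) (-1), (if x = -1 then 1 - g (0, 0) else 0) = 1 - g (0, 0) := by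
      rw [Finset.sum_ite_eq' (Icc (-K) (-1)) (-1) (fun _ => 1 - g (0, 0))]
      simp only [mem_Icc]
      rw [if_pos ⟨by omega, le_refl (-1 : ℤ)⟩]
    rw [t1, t2, t3]
    ring
  -- inequalities
  have hC0 : g (0, 0) ≤ ∑ y ∈ Icc (-K) K, g (0, y) := by
    refine Finset.single_le_sum (fun y _ => h0 (0, y)) ?_
    simp only [mem_Icc]; omega
  have hA1 : (0:ℝ) ≤ ∑ x ∈ Icc 1 K, g (x, 0) := Finset.sum_nonneg (fun x _ => h0 (x, 0))
  have hA2 : (0:ℝ) ≤ ∑ x ∈ Icc (-K) (-1), g (x, 0) := Finset.sum_nonneg (fun x _ => h0 (x, 0))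
  have hg00 : g (0, 0) ≤ 1 := h1 (0, 0)
  have hg00' : 0 ≤ g (0, 0) := h0 (0, 0)
  rw [epst, eg,
    Icc_split3 K hK1 (fun x => ∑ y ∈ Icc (-K) K, pstep (0, 0) g (x, y)),
    Icc_split3 K hK1 (fun x => ∑ y ∈ Icc (-K) K, g (x, y)),
    postotal, negtotal, row0]
  linarith

/-! ### The central inequality for a general centre -/

private lemma key (c : ℤ × ℤ) (f : ℤ × ℤ → ℝ)
    (h0 : ∀ q, 0 ≤ f q) (h1 : ∀ q, f q ≤ 1) (hfin : (Function.support f).Finite) :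
    4 + ∑ᶠ q : ℤ × ℤ, f q ≤ ∑ᶠ q : ℤ × ℤ, pstep c f q := by
  set g : ℤ × ℤ → ℝ := fun p => f (p + c) with hg
  have htrans : ∑ᶠ q : ℤ × ℤ, pstep c f q = ∑ᶠ q : ℤ × ℤ, pstep (0, 0) g q := by
    calc ∑ᶠ q : ℤ × ℤ, pstep c f q = ∑ᶠ q : ℤ × ℤ, pstep (0, 0) g (q - c) :=
          finsum_congr (fun q => pstep_translate c f q)
      _ = ∑ᶠ q : ℤ × ℤ, pstep (0, 0) g q := finsum_comp_equiv (Equiv.subRight c)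
  have hgsum : ∑ᶠ q : ℤ × ℤ, f q = ∑ᶠ q : ℤ × ℤ, g q :=
    (finsum_comp_equiv (Equiv.addRight c)).symm
  have hgfin : (Function.support g).Finite := by
    have he : Function.support g = (fun p : ℤ × ℤ => p + c) ⁻¹' (Function.support f) := rfl
    rw [he]
    exact Set.Finite.preimage (fun a _ b _ h => add_left_injective c h) hfin
  -- find a bound N for the support of g
  set t := hgfin.toFinset with ht
  set N : ℤ := 1 + (t.sup fun q => q.1.natAbs ⊔ q.2.natAbs : ℕ) with hN
  have hN1 : 1 ≤ N := by
    rw [hN]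
    linarith [Int.ofNat_nonneg (t.sup fun q => q.1.natAbs ⊔ q.2.natAbs)]
  have hsupp : ∀ q : ℤ × ℤ, g q ≠ 0 → |q.1| ≤ N ∧ |q.2| ≤ N := by
    intro q hq
    have hmem : q ∈ t := by rw [ht, Set.Finite.mem_toFinset]; exact hq
    have hle : q.1.natAbs ⊔ q.2.natAbs ≤ (t.sup fun q => q.1.natAbs ⊔ q.2.natAbs) :=
      Finset.le_sup (f := fun q : ℤ × ℤ => q.1.natAbs ⊔ q.2.natAbs) hmem
    have h1' : (q.1.natAbs : ℤ) ≤ N := by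
      have h := le_trans (le_max_left _ _) hle
      rw [hN]; omega
    have h2' : (q.2.natAbs : ℤ) ≤ N := by
      have h := le_trans (le_max_right _ _) hle
      rw [hN]; omega
    rw [Int.abs_eq_natAbs, Int.abs_eq_natAbs]
    exact ⟨h1', h2'⟩
  rw [htrans, hgsum]
  exact key0 g N hN1 hsupp (fun q => h0 _) (fun q => h1 _)

/-! ### Properties of `pAux` -/

private lemma pAux_props (S : ℕ → ℤ × ℤ) (M : ℕ) (j : ℕ) :
    (∀ q, 0 ≤ pAux S M j q) ∧ (∀ q, pAux S M j q ≤ 1) ∧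
      (Function.support (pAux S M j)).Finite := by
  induction j with
  | zero =>
    refine ⟨fun q => ?_, fun q => ?_, ?_⟩
    · unfold pAux; split_ifs <;> norm_num
    · unfold pAux; split_ifs <;> norm_num
    · apply Set.Finite.subset (diamond_finite (S M))
      intro q hq
      have hq' : pAux S M 0 q ≠ 0 := hq
      unfold pAux at hq'
      by_contra hd
      simp only [Set.mem_setOf_eq] at hd
      rw [if_neg hd] at hq'
      exact hq' rfl
  | succ j ih =>
    exact ⟨pstep_nonneg _ _ ih.1, pstep_le_one _ _ ih.2.1,
      pstep_support_finite _ _ ih.2.2⟩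

/-- When passing from `p_S^i` to `p_S^{i-1}` (for `2 ≤ i ≤ M`), the total weight
increases by at least `4`. -/
theorem stmt_3 (n : ℕ) (hn : 8 ≤ n) (M : ℕ) (hM : M = n / 4)
    (S : ℕ → ℤ × ℤ) (hS : IsStrategy S M)
    (i : ℕ) (hi1 : 2 ≤ i) (hi2 : i ≤ M) :
    4 + ∑ᶠ q : ℤ × ℤ, pS S M i q ≤ ∑ᶠ q : ℤ × ℤ, pS S M (i - 1) q := by
  have hstep : pS S M (i - 1) = pstep (S (i - 1)) (pS S M i) := by
    unfold pS
    have h1 : M - (i - 1) = (M - i) + 1 := by omega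
    rw [h1]
    show pstep (S (M - (M - i + 1))) (pAux S M (M - i)) = _
    rw [show M - (M - i + 1) = i - 1 by omega]
  obtain ⟨hp0, hp1, hpfin⟩ := pAux_props S M (M - i)
  rw [hstep]
  exact key (S (i - 1)) (pS S M i) hp0 hp1 hpfin
end

section
/- For every integer n ≥ 8 with M = ⌊n/4⌋ and every strategy S, one has t(S) ≥ 4M = 4⌊n/4⌋. Consequently t_n := min over all strategies S of t(S) satisfies t_n ≥ 4⌊n/4⌋, so t_n ≥ n − 4 ∼ n. -/
open Finset

namespace Stmt4


lemma sign_cases {a b : ℤ} (h : a ≠ b) :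
    (b < a ∧ (a - b).sign = 1) ∨ (a < b ∧ (a - b).sign = -1) := by
  rcases lt_or_gt_of_ne h with h' | h'
  · exact Or.inr ⟨h', Int.sign_eq_neg_one_of_neg (by omega)⟩
  · exact Or.inl ⟨h', Int.sign_eq_one_of_pos (by omega)⟩

/-- where monster at `q` can move horizontally -/
def hx (c q : ℤ × ℤ) : ℤ × ℤ := (q.1 + Int.sign (c.1 - q.1), q.2)
def hy (c q : ℤ × ℤ) : ℤ × ℤ := (q.1, q.2 + Int.sign (c.2 - q.2))
/-- designated preimages -/
def px (c r : ℤ × ℤ) : ℤ × ℤ := (r.1 + Int.sign (r.1 - c.1), r.2)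
def py (c r : ℤ × ℤ) : ℤ × ℤ := (r.1, r.2 + Int.sign (r.2 - c.2))

lemma hx_px {c r : ℤ × ℤ} (h : r.1 ≠ c.1) : hx c (px c r) = r := by
  rcases sign_cases h with ⟨h1, h2⟩ | ⟨h1, h2⟩
  · simp only [hx, px, h2]
    rw [Int.sign_eq_neg_one_of_neg (show c.1 - (r.1 + 1) < 0 by omega)]
    exact Prod.ext_iff.mpr ⟨by ring_nf, rfl⟩
  · simp only [hx, px, h2]
    rw [Int.sign_eq_one_of_pos (show 0 < c.1 - (r.1 + -1) by omega)]
    exact Prod.ext_iff.mpr ⟨by ring_nf, rfl⟩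

lemma hy_py {c r : ℤ × ℤ} (h : r.2 ≠ c.2) : hy c (py c r) = r := by
  rcases sign_cases h with ⟨h1, h2⟩ | ⟨h1, h2⟩
  · simp only [hy, py, h2]
    rw [Int.sign_eq_neg_one_of_neg (show c.2 - (r.2 + 1) < 0 by omega)]
    exact Prod.ext_iff.mpr ⟨rfl, by ring_nf⟩
  · simp only [hy, py, h2]
    rw [Int.sign_eq_one_of_pos (show 0 < c.2 - (r.2 + -1) by omega)]
    exact Prod.ext_iff.mpr ⟨rfl, by ring_nf⟩

lemma px_far {c r : ℤ × ℤ} (h : r.1 ≠ c.1) : 2 ≤ |(px c r).1 - c.1| := by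
  rcases sign_cases h with ⟨h1, h2⟩ | ⟨h1, h2⟩ <;>
    simp only [px, h2, Int.abs_eq_natAbs] <;> omega

lemma py_far {c r : ℤ × ℤ} (h : r.2 ≠ c.2) : 2 ≤ |(py c r).2 - c.2| := by
  rcases sign_cases h with ⟨h1, h2⟩ | ⟨h1, h2⟩ <;>
    simp only [py, h2, Int.abs_eq_natAbs] <;> omega

lemma px_snd (c r : ℤ × ℤ) : (px c r).2 = r.2 := rfl
lemma py_fst (c r : ℤ × ℤ) : (py c r).1 = r.1 := rfl

/-- the 5-point diamond around `c` -/
def Dfin (c : ℤ × ℤ) : Finset (ℤ × ℤ) :=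
  {c, (c.1 + 1, c.2), (c.1 - 1, c.2), (c.1, c.2 + 1), (c.1, c.2 - 1)}

lemma mem_Dfin {c q : ℤ × ℤ} : q ∈ Dfin c ↔ |q.1 - c.1| + |q.2 - c.2| ≤ 1 := by
  simp only [Dfin, Finset.mem_insert, Finset.mem_singleton, Prod.ext_iff,
    Int.abs_eq_natAbs]
  omega

lemma card_Dfin (c : ℤ × ℤ) : (Dfin c).card = 5 := by
  simp only [Dfin]
  rw [Finset.card_insert_of_notMem (by simp [Prod.ext_iff] <;> omega),
    Finset.card_insert_of_notMem (by simp [Prod.ext_iff] <;> omega),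
    Finset.card_insert_of_notMem (by simp [Prod.ext_iff] <;> omega),
    Finset.card_insert_of_notMem (by simp [Prod.ext_iff] <;> omega),
    Finset.card_singleton]

lemma pstep_near {c : ℤ × ℤ} {f : ℤ × ℤ → ℝ} {q : ℤ × ℤ}
    (h : |q.1 - c.1| + |q.2 - c.2| ≤ 1) : pstep c f q = 1 := if_pos h

lemma pstep_off {c : ℤ × ℤ} {f : ℤ × ℤ → ℝ} {q : ℤ × ℤ}
    (h1 : q.1 ≠ c.1) (h2 : q.2 ≠ c.2) :
    pstep c f q = (f (hx c q) + f (hy c q)) / 2 := by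
  have hfar : ¬ (|q.1 - c.1| + |q.2 - c.2| ≤ 1) := by
    simp only [Int.abs_eq_natAbs]; omega
  simp only [pstep, hx, hy, if_neg hfar, if_pos (⟨h1, h2⟩ : q.1 ≠ c.1 ∧ q.2 ≠ c.2)]

lemma pstep_col {c : ℤ × ℤ} {f : ℤ × ℤ → ℝ} {q : ℤ × ℤ}
    (h1 : q.1 = c.1) (h2 : 2 ≤ |q.2 - c.2|) :
    pstep c f q = f (hy c q) := by
  have hfar : ¬ (|q.1 - c.1| + |q.2 - c.2| ≤ 1) := by
    simp only [Int.abs_eq_natAbs] at h2 ⊢; omega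
  have hno : ¬ (q.1 ≠ c.1 ∧ q.2 ≠ c.2) := by tauto
  simp only [pstep, hy, if_neg hfar, if_neg hno, if_pos h1]

lemma pstep_row {c : ℤ × ℤ} {f : ℤ × ℤ → ℝ} {q : ℤ × ℤ}
    (h2 : q.2 = c.2) (h1 : 2 ≤ |q.1 - c.1|) :
    pstep c f q = f (hx c q) := by
  have hfar : ¬ (|q.1 - c.1| + |q.2 - c.2| ≤ 1) := by
    simp only [Int.abs_eq_natAbs] at h1 ⊢; omega
  have hne : q.1 ≠ c.1 := by
    intro hq; rw [hq] at h1; simp at h1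
  have hno : ¬ (q.1 ≠ c.1 ∧ q.2 ≠ c.2) := by tauto
  simp only [pstep, hx, if_neg hfar, if_neg hno, if_neg hne]

lemma pstep_nonneg {c : ℤ × ℤ} {f : ℤ × ℤ → ℝ} (h0 : ∀ q, 0 ≤ f q) (q : ℤ × ℤ) :
    0 ≤ pstep c f q := by
  unfold pstep; split_ifs
  · norm_num
  · have := h0 (q.1 + Int.sign (c.1 - q.1), q.2); have := h0 (q.1, q.2 + Int.sign (c.2 - q.2)); linarith
  · exact h0 _
  · exact h0 _

lemma pstep_le_one {c : ℤ × ℤ} {f : ℤ × ℤ → ℝ} (h0 : ∀ q, 0 ≤ f q) (h1 : ∀ q, f q ≤ 1)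
    (q : ℤ × ℤ) : pstep c f q ≤ 1 := by
  unfold pstep; split_ifs
  · norm_num
  · have := h1 (q.1 + Int.sign (c.1 - q.1), q.2); have := h1 (q.1, q.2 + Int.sign (c.2 - q.2)); linarith
  · exact h1 _
  · exact h1 _

/-- enclosing finite set for the support of `pstep c f` -/
def Bset (c : ℤ × ℤ) (T : Finset (ℤ × ℤ)) : Finset (ℤ × ℤ) :=
  Dfin c ∪ T.image (fun r => (r.1 + 1, r.2)) ∪ T.image (fun r => (r.1 - 1, r.2))
    ∪ T.image (fun r => (r.1, r.2 + 1)) ∪ T.image (fun r => (r.1, r.2 - 1)) ∪ T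

lemma B_of_mem_D {c : ℤ × ℤ} {T : Finset (ℤ × ℤ)} {q : ℤ × ℤ} (h : q ∈ Dfin c) :
    q ∈ Bset c T := by
  simp only [Bset, Finset.mem_union]; tauto

lemma B_of_mem_T {c : ℤ × ℤ} {T : Finset (ℤ × ℤ)} {q : ℤ × ℤ} (h : q ∈ T) :
    q ∈ Bset c T := by
  simp only [Bset, Finset.mem_union]; tauto

lemma B_mem_xp {c : ℤ × ℤ} {T : Finset (ℤ × ℤ)} {r : ℤ × ℤ} (h : r ∈ T) :
    (r.1 + 1, r.2) ∈ Bset c T := by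
  simp only [Bset, Finset.mem_union, Finset.mem_image]
  exact Or.inl (Or.inl (Or.inl (Or.inl (Or.inr ⟨r, h, rfl⟩))))

lemma B_mem_xm {c : ℤ × ℤ} {T : Finset (ℤ × ℤ)} {r : ℤ × ℤ} (h : r ∈ T) :
    (r.1 - 1, r.2) ∈ Bset c T := by
  simp only [Bset, Finset.mem_union, Finset.mem_image]
  exact Or.inl (Or.inl (Or.inl (Or.inr ⟨r, h, rfl⟩)))

lemma B_mem_yp {c : ℤ × ℤ} {T : Finset (ℤ × ℤ)} {r : ℤ × ℤ} (h : r ∈ T) :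
    (r.1, r.2 + 1) ∈ Bset c T := by
  simp only [Bset, Finset.mem_union, Finset.mem_image]
  exact Or.inl (Or.inl (Or.inr ⟨r, h, rfl⟩))

lemma B_mem_ym {c : ℤ × ℤ} {T : Finset (ℤ × ℤ)} {r : ℤ × ℤ} (h : r ∈ T) :
    (r.1, r.2 - 1) ∈ Bset c T := by
  simp only [Bset, Finset.mem_union, Finset.mem_image]
  exact Or.inl (Or.inr ⟨r, h, rfl⟩)

lemma px_mem_B {c : ℤ × ℤ} {T : Finset (ℤ × ℤ)} {r : ℤ × ℤ} (h : r ∈ T) :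
    px c r ∈ Bset c T := by
  by_cases hr : r.1 = c.1
  · have : px c r = r := by
      simp only [px, hr, sub_self, Int.sign_zero, add_zero]
      exact Prod.ext_iff.mpr ⟨hr.symm, rfl⟩
    rw [this]; exact B_of_mem_T h
  · rcases sign_cases hr with ⟨h1, h2⟩ | ⟨h1, h2⟩
    · have : px c r = (r.1 + 1, r.2) := by simp only [px, h2]
      rw [this]; exact B_mem_xp h
    · have : px c r = (r.1 - 1, r.2) := by
        simp only [px, h2]; exact Prod.ext_iff.mpr ⟨by ring_nf, rfl⟩
      rw [this]; exact B_mem_xm h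

lemma py_mem_B {c : ℤ × ℤ} {T : Finset (ℤ × ℤ)} {r : ℤ × ℤ} (h : r ∈ T) :
    py c r ∈ Bset c T := by
  by_cases hr : r.2 = c.2
  · have : py c r = r := by
      simp only [py, hr, sub_self, Int.sign_zero, add_zero]
      exact Prod.ext_iff.mpr ⟨rfl, hr.symm⟩
    rw [this]; exact B_of_mem_T h
  · rcases sign_cases hr with ⟨h1, h2⟩ | ⟨h1, h2⟩
    · have : py c r = (r.1, r.2 + 1) := by simp only [py, h2]
      rw [this]; exact B_mem_yp h
    · have : py c r = (r.1, r.2 - 1) := by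
        simp only [py, h2]; exact Prod.ext_iff.mpr ⟨rfl, by ring_nf⟩
      rw [this]; exact B_mem_ym h

lemma hx_mem_B {c : ℤ × ℤ} {T : Finset (ℤ × ℤ)} {q : ℤ × ℤ} (h : hx c q ∈ T) :
    q ∈ Bset c T := by
  by_cases hq : q.1 = c.1
  · have : hx c q = q := by
      simp only [hx, hq, sub_self, Int.sign_zero, add_zero]
      exact Prod.ext_iff.mpr ⟨hq.symm, rfl⟩
    rw [this] at h; exact B_of_mem_T h
  · rcases sign_cases (show c.1 ≠ q.1 from Ne.symm hq) with ⟨h1, h2⟩ | ⟨h1, h2⟩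
    · -- q.1 < c.1 : sign (c.1-q.1) = 1, hx q = (q.1+1, q.2), q = (hx q).1 - 1
      have hform : hx c q = (q.1 + 1, q.2) := by simp only [hx, h2]
      have : q = ((hx c q).1 - 1, (hx c q).2) := by
        rw [hform]; exact Prod.ext_iff.mpr ⟨by ring_nf, rfl⟩
      rw [this]; exact B_mem_xm h
    · have hform : hx c q = (q.1 - 1, q.2) := by
        simp only [hx, h2]; exact Prod.ext_iff.mpr ⟨by ring_nf, rfl⟩
      have : q = ((hx c q).1 + 1, (hx c q).2) := by
        rw [hform]; exact Prod.ext_iff.mpr ⟨by ring_nf, rfl⟩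
      rw [this]; exact B_mem_xp h

lemma hy_mem_B {c : ℤ × ℤ} {T : Finset (ℤ × ℤ)} {q : ℤ × ℤ} (h : hy c q ∈ T) :
    q ∈ Bset c T := by
  by_cases hq : q.2 = c.2
  · have : hy c q = q := by
      simp only [hy, hq, sub_self, Int.sign_zero, add_zero]
      exact Prod.ext_iff.mpr ⟨rfl, hq.symm⟩
    rw [this] at h; exact B_of_mem_T h
  · rcases sign_cases (show c.2 ≠ q.2 from Ne.symm hq) with ⟨h1, h2⟩ | ⟨h1, h2⟩
    · have hform : hy c q = (q.1, q.2 + 1) := by simp only [hy, h2]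
      have : q = ((hy c q).1, (hy c q).2 - 1) := by
        rw [hform]; exact Prod.ext_iff.mpr ⟨rfl, by ring_nf⟩
      rw [this]; exact B_mem_ym h
    · have hform : hy c q = (q.1, q.2 - 1) := by
        simp only [hy, h2]; exact Prod.ext_iff.mpr ⟨rfl, by ring_nf⟩
      have : q = ((hy c q).1, (hy c q).2 + 1) := by
        rw [hform]; exact Prod.ext_iff.mpr ⟨rfl, by ring_nf⟩
      rw [this]; exact B_mem_yp h

lemma support_pstep_subset (c : ℤ × ℤ) (f : ℤ × ℤ → ℝ) (T : Finset (ℤ × ℤ))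
    (hT : Function.support f ⊆ ↑T) :
    Function.support (pstep c f) ⊆ ↑(Bset c T) := by
  intro q hq
  by_cases hD : |q.1 - c.1| + |q.2 - c.2| ≤ 1
  · exact B_of_mem_D (mem_Dfin.mpr hD)
  have key : f (hx c q) ≠ 0 ∨ f (hy c q) ≠ 0 := by
    by_contra hcon
    push_neg at hcon
    apply hq
    show pstep c f q = 0
    have e1 : f (q.1 + Int.sign (c.1 - q.1), q.2) = 0 := hcon.1
    have e2 : f (q.1, q.2 + Int.sign (c.2 - q.2)) = 0 := hcon.2
    unfold pstep
    rw [if_neg hD]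
    split_ifs <;> simp [e1, e2]
  rcases key with hk | hk
  · exact hx_mem_B (hT hk)
  · exact hy_mem_B (hT hk)

lemma sum_pstep (c : ℤ × ℤ) (f : ℤ × ℤ → ℝ) (h0 : ∀ q, 0 ≤ f q) (h1 : ∀ q, f q ≤ 1)
    (hf : (Function.support f).Finite) :
    4 + ∑ᶠ q, f q ≤ ∑ᶠ q, pstep c f q := by
  classical
  set T : Finset (ℤ × ℤ) := hf.toFinset with hTdef
  have hT : Function.support f ⊆ ↑T := by simp [hTdef]
  set B : Finset (ℤ × ℤ) := Bset c T with hBdef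
  rw [finsum_eq_finset_sum_of_support_subset _ (support_pstep_subset c f T hT),
      finsum_eq_finset_sum_of_support_subset f hT]
  have hDB : Dfin c ⊆ B := fun q hq => B_of_mem_D hq
  rw [← Finset.sum_sdiff hDB]
  have hDval : ∑ q ∈ Dfin c, pstep c f q = 5 := by
    rw [Finset.sum_congr rfl (fun q hq => pstep_near (f := f) (mem_Dfin.mp hq))]
    rw [Finset.sum_const, card_Dfin]; norm_num
  rw [hDval]
  have herase : ∑ q ∈ T, f q - 1 ≤ ∑ r ∈ T.erase c, f r := by
    by_cases hc : c ∈ T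
    · rw [Finset.sum_erase_eq_sub hc]; linarith [h1 c]
    · rw [Finset.erase_eq_of_notMem hc]; linarith
  suffices hmain : ∑ r ∈ T.erase c, f r ≤ ∑ q ∈ B \ Dfin c, pstep c f q by linarith
  have hPfact : ∀ q ∈ B \ Dfin c, ¬ (|q.1 - c.1| + |q.2 - c.2| ≤ 1) := by
    intro q hq
    rw [Finset.mem_sdiff] at hq
    exact fun hcon => hq.2 (mem_Dfin.mpr hcon)
  rw [← Finset.sum_filter_add_sum_filter_not (B \ Dfin c) (fun q => q.2 = c.2) (pstep c f),
      ← Finset.sum_filter_add_sum_filter_not ((B \ Dfin c).filter (fun q => ¬ q.2 = c.2))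
        (fun q => q.1 = c.1) (pstep c f),
      ← Finset.sum_filter_add_sum_filter_not (T.erase c) (fun q => q.2 = c.2) f,
      ← Finset.sum_filter_add_sum_filter_not ((T.erase c).filter (fun q => ¬ q.2 = c.2))
        (fun q => q.1 = c.1) f]
  have hrow : ∑ r ∈ (T.erase c).filter (fun r => r.2 = c.2), f r
      ≤ ∑ q ∈ (B \ Dfin c).filter (fun q => q.2 = c.2), pstep c f q := by
    have hmemE : ∀ r ∈ (T.erase c).filter (fun r => r.2 = c.2),
        r ∈ T ∧ r.1 ≠ c.1 ∧ r.2 = c.2 := by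
      intro r hr
      rw [Finset.mem_filter, Finset.mem_erase] at hr
      refine ⟨hr.1.2, ?_, hr.2⟩
      intro h'
      exact hr.1.1 (Prod.ext_iff.mpr ⟨h', hr.2⟩)
    have heval : ∀ q ∈ (B \ Dfin c).filter (fun q => q.2 = c.2),
        pstep c f q = f (hx c q) := by
      intro q hq
      rw [Finset.mem_filter] at hq
      have hfar := hPfact q hq.1
      apply pstep_row hq.2
      rw [hq.2] at hfar
      simp only [Int.abs_eq_natAbs] at hfar ⊢
      omega
    rw [Finset.sum_congr rfl heval]
    have hinj : ∀ a ∈ (T.erase c).filter (fun r => r.2 = c.2),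
        ∀ b ∈ (T.erase c).filter (fun r => r.2 = c.2), px c a = px c b → a = b := by
      intro a ha b hb hab
      rw [← hx_px (c := c) (hmemE a ha).2.1, ← hx_px (c := c) (hmemE b hb).2.1, hab]
    calc ∑ r ∈ (T.erase c).filter (fun r => r.2 = c.2), f r
        = ∑ q ∈ ((T.erase c).filter (fun r => r.2 = c.2)).image (px c), f (hx c q) := by
          rw [Finset.sum_image hinj]
          exact Finset.sum_congr rfl (fun r hr => by rw [hx_px (hmemE r hr).2.1])
      _ ≤ ∑ q ∈ (B \ Dfin c).filter (fun q => q.2 = c.2), f (hx c q) := by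
          apply Finset.sum_le_sum_of_subset_of_nonneg ?_ (fun i _ _ => h0 _)
          intro q hq
          rw [Finset.mem_image] at hq
          obtain ⟨r, hr, rfl⟩ := hq
          obtain ⟨hrT, hr1, hr2⟩ := hmemE r hr
          rw [Finset.mem_filter, Finset.mem_sdiff]
          have hfar := px_far (c := c) hr1
          refine ⟨⟨px_mem_B hrT, ?_⟩, ?_⟩
          · intro hD
            rw [mem_Dfin] at hD
            have := abs_nonneg ((px c r).2 - c.2)
            linarith
          · rw [px_snd, hr2]
  have hcol : ∑ r ∈ ((T.erase c).filter (fun r => ¬ r.2 = c.2)).filter (fun r => r.1 = c.1), f r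
      ≤ ∑ q ∈ ((B \ Dfin c).filter (fun q => ¬ q.2 = c.2)).filter (fun q => q.1 = c.1),
          pstep c f q := by
    have hmemE : ∀ r ∈ ((T.erase c).filter (fun r => ¬ r.2 = c.2)).filter (fun r => r.1 = c.1),
        r ∈ T ∧ r.1 = c.1 ∧ r.2 ≠ c.2 := by
      intro r hr
      rw [Finset.mem_filter, Finset.mem_filter, Finset.mem_erase] at hr
      exact ⟨hr.1.1.2, hr.2, hr.1.2⟩
    have heval : ∀ q ∈ ((B \ Dfin c).filter (fun q => ¬ q.2 = c.2)).filter (fun q => q.1 = c.1),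
        pstep c f q = f (hy c q) := by
      intro q hq
      rw [Finset.mem_filter, Finset.mem_filter] at hq
      have hfar := hPfact q hq.1.1
      apply pstep_col hq.2
      rw [hq.2] at hfar
      simp only [Int.abs_eq_natAbs] at hfar ⊢
      omega
    rw [Finset.sum_congr rfl heval]
    have hinj : ∀ a ∈ ((T.erase c).filter (fun r => ¬ r.2 = c.2)).filter (fun r => r.1 = c.1),
        ∀ b ∈ ((T.erase c).filter (fun r => ¬ r.2 = c.2)).filter (fun r => r.1 = c.1),
        py c a = py c b → a = b := by
      intro a ha b hb hab
      rw [← hy_py (c := c) (hmemE a ha).2.2, ← hy_py (c := c) (hmemE b hb).2.2, hab]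
    calc ∑ r ∈ ((T.erase c).filter (fun r => ¬ r.2 = c.2)).filter (fun r => r.1 = c.1), f r
        = ∑ q ∈ (((T.erase c).filter (fun r => ¬ r.2 = c.2)).filter
            (fun r => r.1 = c.1)).image (py c), f (hy c q) := by
          rw [Finset.sum_image hinj]
          exact Finset.sum_congr rfl (fun r hr => by rw [hy_py (hmemE r hr).2.2])
      _ ≤ ∑ q ∈ ((B \ Dfin c).filter (fun q => ¬ q.2 = c.2)).filter (fun q => q.1 = c.1),
            f (hy c q) := by
          apply Finset.sum_le_sum_of_subset_of_nonneg ?_ (fun i _ _ => h0 _)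
          intro q hq
          rw [Finset.mem_image] at hq
          obtain ⟨r, hr, rfl⟩ := hq
          obtain ⟨hrT, hr1, hr2⟩ := hmemE r hr
          rw [Finset.mem_filter, Finset.mem_filter, Finset.mem_sdiff]
          have hfar := py_far (c := c) hr2
          refine ⟨⟨⟨py_mem_B hrT, ?_⟩, ?_⟩, ?_⟩
          · intro hD
            rw [mem_Dfin] at hD
            have := abs_nonneg ((py c r).1 - c.1)
            linarith
          · intro h'
            rw [h'] at hfar
            simp at hfar
          · rw [py_fst, hr1]
  have hoff : ∑ r ∈ ((T.erase c).filter (fun r => ¬ r.2 = c.2)).filter (fun r => ¬ r.1 = c.1), f r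
      ≤ ∑ q ∈ ((B \ Dfin c).filter (fun q => ¬ q.2 = c.2)).filter (fun q => ¬ q.1 = c.1),
          pstep c f q := by
    have hmemE : ∀ r ∈ ((T.erase c).filter (fun r => ¬ r.2 = c.2)).filter (fun r => ¬ r.1 = c.1),
        r ∈ T ∧ r.1 ≠ c.1 ∧ r.2 ≠ c.2 := by
      intro r hr
      rw [Finset.mem_filter, Finset.mem_filter, Finset.mem_erase] at hr
      exact ⟨hr.1.1.2, hr.2, hr.1.2⟩
    have hmemP : ∀ q ∈ ((B \ Dfin c).filter (fun q => ¬ q.2 = c.2)).filter (fun q => ¬ q.1 = c.1),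
        q.1 ≠ c.1 ∧ q.2 ≠ c.2 := by
      intro q hq
      rw [Finset.mem_filter, Finset.mem_filter] at hq
      exact ⟨hq.2, hq.1.2⟩
    have heval : ∀ q ∈ ((B \ Dfin c).filter (fun q => ¬ q.2 = c.2)).filter (fun q => ¬ q.1 = c.1),
        pstep c f q = (f (hx c q) + f (hy c q)) / 2 := by
      intro q hq
      exact pstep_off (hmemP q hq).1 (hmemP q hq).2
    rw [Finset.sum_congr rfl heval]
    have hxbound : ∑ r ∈ ((T.erase c).filter (fun r => ¬ r.2 = c.2)).filter
          (fun r => ¬ r.1 = c.1), f r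
        ≤ ∑ q ∈ ((B \ Dfin c).filter (fun q => ¬ q.2 = c.2)).filter (fun q => ¬ q.1 = c.1),
            f (hx c q) := by
      have hinj : ∀ a ∈ ((T.erase c).filter (fun r => ¬ r.2 = c.2)).filter (fun r => ¬ r.1 = c.1),
          ∀ b ∈ ((T.erase c).filter (fun r => ¬ r.2 = c.2)).filter (fun r => ¬ r.1 = c.1),
          px c a = px c b → a = b := by
        intro a ha b hb hab
        rw [← hx_px (c := c) (hmemE a ha).2.1, ← hx_px (c := c) (hmemE b hb).2.1, hab]
      calc ∑ r ∈ ((T.erase c).filter (fun r => ¬ r.2 = c.2)).filter (fun r => ¬ r.1 = c.1), f r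
          = ∑ q ∈ (((T.erase c).filter (fun r => ¬ r.2 = c.2)).filter
              (fun r => ¬ r.1 = c.1)).image (px c), f (hx c q) := by
            rw [Finset.sum_image hinj]
            exact Finset.sum_congr rfl (fun r hr => by rw [hx_px (hmemE r hr).2.1])
        _ ≤ _ := by
            apply Finset.sum_le_sum_of_subset_of_nonneg ?_ (fun i _ _ => h0 _)
            intro q hq
            rw [Finset.mem_image] at hq
            obtain ⟨r, hr, rfl⟩ := hq
            obtain ⟨hrT, hr1, hr2⟩ := hmemE r hr
            rw [Finset.mem_filter, Finset.mem_filter, Finset.mem_sdiff]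
            have hfar := px_far (c := c) hr1
            refine ⟨⟨⟨px_mem_B hrT, ?_⟩, ?_⟩, ?_⟩
            · intro hD
              rw [mem_Dfin] at hD
              have := abs_nonneg ((px c r).2 - c.2)
              linarith
            · rw [px_snd]; exact hr2
            · intro h'
              rw [h'] at hfar
              simp at hfar
    have hybound : ∑ r ∈ ((T.erase c).filter (fun r => ¬ r.2 = c.2)).filter
          (fun r => ¬ r.1 = c.1), f r
        ≤ ∑ q ∈ ((B \ Dfin c).filter (fun q => ¬ q.2 = c.2)).filter (fun q => ¬ q.1 = c.1),
            f (hy c q) := by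
      have hinj : ∀ a ∈ ((T.erase c).filter (fun r => ¬ r.2 = c.2)).filter (fun r => ¬ r.1 = c.1),
          ∀ b ∈ ((T.erase c).filter (fun r => ¬ r.2 = c.2)).filter (fun r => ¬ r.1 = c.1),
          py c a = py c b → a = b := by
        intro a ha b hb hab
        rw [← hy_py (c := c) (hmemE a ha).2.2, ← hy_py (c := c) (hmemE b hb).2.2, hab]
      calc ∑ r ∈ ((T.erase c).filter (fun r => ¬ r.2 = c.2)).filter (fun r => ¬ r.1 = c.1), f r
          = ∑ q ∈ (((T.erase c).filter (fun r => ¬ r.2 = c.2)).filter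
              (fun r => ¬ r.1 = c.1)).image (py c), f (hy c q) := by
            rw [Finset.sum_image hinj]
            exact Finset.sum_congr rfl (fun r hr => by rw [hy_py (hmemE r hr).2.2])
        _ ≤ _ := by
            apply Finset.sum_le_sum_of_subset_of_nonneg ?_ (fun i _ _ => h0 _)
            intro q hq
            rw [Finset.mem_image] at hq
            obtain ⟨r, hr, rfl⟩ := hq
            obtain ⟨hrT, hr1, hr2⟩ := hmemE r hr
            rw [Finset.mem_filter, Finset.mem_filter, Finset.mem_sdiff]
            have hfar := py_far (c := c) hr2
            refine ⟨⟨⟨py_mem_B hrT, ?_⟩, ?_⟩, ?_⟩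
            · intro hD
              rw [mem_Dfin] at hD
              have := abs_nonneg ((py c r).1 - c.1)
              linarith
            · intro h'
              rw [h'] at hfar
              simp at hfar
            · rw [py_fst]; exact hr1
    have hsplit : ∑ q ∈ ((B \ Dfin c).filter (fun q => ¬ q.2 = c.2)).filter
          (fun q => ¬ q.1 = c.1), (f (hx c q) + f (hy c q)) / 2
        = ((∑ q ∈ ((B \ Dfin c).filter (fun q => ¬ q.2 = c.2)).filter (fun q => ¬ q.1 = c.1),
              f (hx c q))
          + ∑ q ∈ ((B \ Dfin c).filter (fun q => ¬ q.2 = c.2)).filter (fun q => ¬ q.1 = c.1),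
              f (hy c q)) / 2 := by
      rw [← Finset.sum_add_distrib, Finset.sum_div]
    rw [hsplit]
    linarith
  exact add_le_add hrow (add_le_add hcol hoff)

lemma pAux_zero_eval (S : ℕ → ℤ × ℤ) (M : ℕ) (q : ℤ × ℤ) :
    pAux S M 0 q = if |q.1 - (S M).1| + |q.2 - (S M).2| ≤ 1 then 1 else 0 := rfl

lemma pAux_props (S : ℕ → ℤ × ℤ) (M : ℕ) : ∀ j,
    (∀ q, 0 ≤ pAux S M j q) ∧ (∀ q, pAux S M j q ≤ 1) ∧
    (Function.support (pAux S M j)).Finite ∧ 5 + 4 * (j : ℝ) ≤ ∑ᶠ q, pAux S M j q := by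
  intro j
  induction j with
  | zero =>
    have hsub : Function.support (pAux S M 0) ⊆ ↑(Dfin (S M)) := by
      intro q hq
      rw [Function.mem_support, pAux_zero_eval] at hq
      by_cases h : |q.1 - (S M).1| + |q.2 - (S M).2| ≤ 1
      · exact mem_Dfin.mpr h
      · rw [if_neg h] at hq; exact absurd rfl hq
    refine ⟨?_, ?_, ?_, ?_⟩
    · intro q; rw [pAux_zero_eval]; split_ifs <;> norm_num
    · intro q; rw [pAux_zero_eval]; split_ifs <;> norm_num
    · exact Set.Finite.subset (Dfin (S M)).finite_toSet hsub
    · rw [finsum_eq_finset_sum_of_support_subset _ hsub]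
      rw [Finset.sum_congr rfl
        (fun q hq => by rw [pAux_zero_eval, if_pos (mem_Dfin.mp hq)])]
      rw [Finset.sum_const, card_Dfin]
      norm_num
  | succ j ih =>
    obtain ⟨ih0, ih1, ihfin, ihsum⟩ := ih
    have hstep : pAux S M (j + 1) = pstep (S (M - (j + 1))) (pAux S M j) := rfl
    have hT : Function.support (pAux S M j) ⊆ ↑ihfin.toFinset := by simp
    refine ⟨?_, ?_, ?_, ?_⟩
    · intro q; rw [hstep]; exact pstep_nonneg ih0 q
    · intro q; rw [hstep]; exact pstep_le_one ih0 ih1 q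
    · rw [hstep]
      exact Set.Finite.subset (Bset (S (M - (j + 1))) ihfin.toFinset).finite_toSet
        (support_pstep_subset _ _ _ hT)
    · have := sum_pstep (S (M - (j + 1))) (pAux S M j) ih0 ih1 ihfin
      rw [hstep]
      push_cast
      linarith

end Stmt4

/-- Every strategy `S` satisfies `t(S) ≥ 4M` where `M = ⌊n/4⌋`; hence
`t_n = min_S t(S) ≥ 4⌊n/4⌋ ≥ n - 4`. Combined with Theorem 2.1 this gives
`z(Tₙ) = O(n²)`. -/
theorem stmt_4 (n : ℕ) (hn : 8 ≤ n) (M : ℕ) (hM : M = n / 4) :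
    (∀ S : ℕ → ℤ × ℤ, IsStrategy S M → 4 * (M : ℝ) ≤ tS S M) ∧
    (n : ℝ) - 4 ≤ 4 * (M : ℝ) := by
  have hM2 : 2 ≤ M := by omega
  constructor
  · intro S _
    have h := (Stmt4.pAux_props S M (M - 1)).2.2.2
    have hps : pS S M 1 = pAux S M (M - 1) := rfl
    have hcast : ((M - 1 : ℕ) : ℝ) = (M : ℝ) - 1 := by
      rw [Nat.cast_sub (by omega)]; norm_num
    rw [tS, hps]
    rw [hcast] at h
    linarith
  · have h : n ≤ 4 * M + 3 := by omega
    have : (n : ℝ) ≤ 4 * (M : ℝ) + 3 := by exact_mod_cast h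
    linarith
end

section
/- For every integer n ≥ 8 with M = ⌊n/4⌋, every strategy S (with x-coordinate sequence (x_i)), every i with 1 ≤ i ≤ M, and every x ∈ ℤ, the consecutive differences of the function z^i are bounded by 4: |z^i(x) − z^i(x + 1)| ≤ 4. -/
open Finset

/-- `zAux xs M j` is the function `z^{M-j}` of the one-dimensional coupling: `zAux xs M 0 = z^M`
(with `z^M(0) = 3`, `z^M(±1) = 1`, `z^M = 0` elsewhere), and `z^{i-1}` is obtained from `z^i`
using the survivor's `x`-coordinate `x_{i-1} = xs (i-1)` as the centre. -/
noncomputable def zAux (xs : ℕ → ℤ) (M : ℕ) : ℕ → ℤ → ℝ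
  | 0 => fun x => if x = 0 then 3 else if x = 1 ∨ x = -1 then 1 else 0
  | j + 1 => fun x =>
      if x = xs (M - (j + 1)) then zAux xs M j x + 2
      else if xs (M - (j + 1)) < x then (zAux xs M j (x - 1) + zAux xs M j x) / 2
      else (zAux xs M j (x + 1) + zAux xs M j x) / 2

/-- `zS S M i = z^i` (for `1 ≤ i ≤ M`), built from the `x`-coordinate sequence of `S`. -/
noncomputable def zS (S : ℕ → ℤ × ℤ) (M : ℕ) (i : ℕ) : ℤ → ℝ :=
  zAux (fun k => (S k).1) M (M - i)

lemma zAux_diff (xs : ℕ → ℤ) (M : ℕ) : ∀ (j : ℕ) (x : ℤ),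
    |zAux xs M j x - zAux xs M j (x + 1)| ≤ 4 := by
  intro j
  induction j with
  | zero =>
    intro x
    have h : ∀ y : ℤ, 0 ≤ zAux xs M 0 y ∧ zAux xs M 0 y ≤ 3 := by
      intro y; simp only [zAux]; split_ifs <;> norm_num
    obtain ⟨h1, h2⟩ := h x
    obtain ⟨h3, h4⟩ := h (x + 1)
    rw [abs_le]; constructor <;> linarith
  | succ j ih =>
    intro x
    have e1 := abs_le.mp (ih x)
    have e2 := abs_le.mp (ih (x + 1))
    have e3 := abs_le.mp (ih (x - 1))
    have hx : x - 1 + 1 = x := by ring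
    rw [hx] at e3
    have hx2 : x + 1 - 1 = x := by ring
    simp only [zAux, hx2]
    split_ifs <;> [skip; skip; skip; skip; skip; skip; skip; skip; skip] <;>
      first
        | (exfalso; omega)
        | (rw [abs_le]; constructor <;> linarith)

/-- Consecutive differences of `z^i` are bounded by `4`: for every strategy `S`, every
`1 ≤ i ≤ M` and every `x ∈ ℤ`, `|z^i(x) - z^i(x+1)| ≤ 4`. -/
theorem stmt_6 (n : ℕ) (hn : 8 ≤ n) (M : ℕ) (hM : M = n / 4)
    (S : ℕ → ℤ × ℤ) (hS : IsStrategy S M)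
    (i : ℕ) (hi1 : 1 ≤ i) (hi2 : i ≤ M) (x : ℤ) :
    |zS S M i x - zS S M i (x + 1)| ≤ 4 := by
  unfold zS
  exact zAux_diff _ M _ x
end

section
/- For every integer n ≥ 8 with M = ⌊n/4⌋, every strategy S (with x-coordinate sequence (x_i)), and every i with 2 ≤ i ≤ M: if x_{i−1} = x_i (the survivor pauses in the x-projection) then z^{i−1}(x_{i−1}) = z^i(x_i) + 2, while if x_{i−1} ≠ x_i (the survivor moves in the x-projection) then z^{i−1}(x_{i−1}) ≥ z^i(x_i) − 2. That is, the sequence (z^i(x_i)), followed from i = M down to i = 1, goes up by 2 at every pause and goes down by at most 2 at every move. -/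
open Finset

/-- Adjacent values of `zAux` differ by at most `4`. -/
lemma zAux_adj (xs : ℕ → ℤ) (M : ℕ) : ∀ j, ∀ x : ℤ,
    |zAux xs M j x - zAux xs M j (x + 1)| ≤ 4 := by
  intro j
  induction j with
  | zero =>
    intro x
    simp only [zAux]
    split_ifs <;> first | norm_num | omega
  | succ j ih =>
    intro x
    have h1 := ih (x - 1)
    have h2 := ih x
    have h3 := ih (x + 1)
    rw [show x - 1 + 1 = x from by ring] at h1
    rw [abs_sub_le_iff] at h1 h2 h3
    simp only [zAux, add_sub_cancel_right]
    split_ifs <;>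
      (rw [abs_sub_le_iff]; constructor <;> linarith [h1.1, h1.2, h2.1, h2.2, h3.1, h3.2])

/-- Following the sequence `(z^i(x_i))` from `i = M` down to `i = 1`: it goes up by exactly
`2` when the survivor pauses in the `x`-projection (`x_{i-1} = x_i`) and goes down by at
most `2` when he moves (`x_{i-1} ≠ x_i`). -/
theorem stmt_7 (n : ℕ) (hn : 8 ≤ n) (M : ℕ) (hM : M = n / 4)
    (S : ℕ → ℤ × ℤ) (hS : IsStrategy S M)
    (i : ℕ) (hi1 : 2 ≤ i) (hi2 : i ≤ M) :
    ((S (i - 1)).1 = (S i).1 → zS S M (i - 1) ((S (i - 1)).1) = zS S M i ((S i).1) + 2) ∧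
    ((S (i - 1)).1 ≠ (S i).1 → zS S M i ((S i).1) - 2 ≤ zS S M (i - 1) ((S (i - 1)).1)) := by
  have hmove := hS.2 (i - 1) (by omega) (by omega)
  rw [show i - 1 + 1 = i from by omega] at hmove
  set xs : ℕ → ℤ := fun k => (S k).1 with hxsdef
  have e1 : zS S M (i - 1) = zAux xs M (M - i + 1) := by
    unfold zS
    rw [show M - (i - 1) = M - i + 1 from by omega]
  have e2 : zS S M i = zAux xs M (M - i) := rfl
  have ec : M - (M - i + 1) = i - 1 := by omega
  have hz1 : zAux xs M (M - i + 1) ((S (i - 1)).1)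
      = zAux xs M (M - i) ((S (i - 1)).1) + 2 := by
    simp only [zAux, ec]
    simp
    exact fun h => absurd rfl h
  constructor
  · intro h
    rw [e1, e2, hz1, h]
  · intro h
    rw [e1, e2, hz1]
    have h1 : |(S i).1 - (S (i - 1)).1| ≤ 1 := by
      have := abs_nonneg ((S i).2 - (S (i - 1)).2)
      linarith
    rw [abs_le] at h1
    have hx : (S i).1 = (S (i - 1)).1 + 1 ∨ (S i).1 = (S (i - 1)).1 - 1 := by omega
    rcases hx with hx | hx
    · have hadj := zAux_adj xs M (M - i) ((S (i - 1)).1)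
      rw [abs_sub_le_iff] at hadj
      rw [hx]
      linarith [hadj.2]
    · have hadj := zAux_adj xs M (M - i) ((S (i - 1)).1 - 1)
      rw [show (S (i - 1)).1 - 1 + 1 = (S (i - 1)).1 from by ring] at hadj
      rw [abs_sub_le_iff] at hadj
      rw [hx]
      linarith [hadj.1]
end

section
/- For every integer n ≥ 8 with M = ⌊n/4⌋, every strategy S, every i with 1 ≤ i ≤ M, and every x ∈ ℤ, the x-projection of p_S^i dominates z^i: q_S^i(x) := ∑_{y ∈ ℤ} p_S^i(x, y) ≥ z^i(x). -/
open Finset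

private lemma sum_Ioc_split (f : ℤ → ℝ) {a b c : ℤ} (h1 : a ≤ b) (h2 : b ≤ c) :
    ∑ y ∈ Ioc a c, f y = (∑ y ∈ Ioc a b, f y) + ∑ y ∈ Ioc b c, f y := by
  rw [← Finset.sum_union ?_, Finset.Ioc_union_Ioc_eq_Ioc h1 h2]
  rw [Finset.disjoint_left]
  intro z hz hz'
  simp only [Finset.mem_Ioc] at hz hz'
  omega

private lemma sum_shift (f : ℤ → ℝ) (a b : ℤ) :
    ∑ y ∈ Ioc a b, f (y + 1) = ∑ y ∈ Ioc (a + 1) (b + 1), f y := by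
  rw [← Finset.map_add_right_Ioc, Finset.sum_map]; simp

private lemma sum_shift' (f : ℤ → ℝ) (a b : ℤ) :
    ∑ y ∈ Ioc a b, f (y - 1) = ∑ y ∈ Ioc (a - 1) (b - 1), f y := by
  have h := sum_shift (fun y => f (y - 1)) (a - 1) (b - 1)
  simp only [add_sub_cancel_right, sub_add_cancel] at h
  exact h.symm

private lemma sum_Ioc_head (f : ℤ → ℝ) {b c : ℤ} (h : b ≤ c) :
    ∑ y ∈ Ioc (b - 1) c, f y = f b + ∑ y ∈ Ioc b c, f y := by
  have h2 : Ioc (b - 1) c = insert b (Ioc b c) := by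
    ext y; simp only [Finset.mem_Ioc, Finset.mem_insert]; omega
  rw [h2, Finset.sum_insert (by simp)]

private lemma sum_Ioc_window (f : ℤ → ℝ) {B a c : ℤ} (hs : ∀ y, f y ≠ 0 → |y| ≤ B)
    (ha : a ≤ -B - 1) (hc : B ≤ c) :
    ∑ y ∈ Ioc a c, f y = ∑ y ∈ Icc (-B) B, f y := by
  refine (Finset.sum_subset ?_ ?_).symm
  · intro y hy; simp only [Finset.mem_Icc, Finset.mem_Ioc] at *; omega
  · intro y hy hn
    by_contra h
    have h2 := abs_le.mp (hs y h)
    simp only [Finset.mem_Icc] at hn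
    omega

private lemma center_sum (v g : ℤ → ℝ) (B b : ℤ)
    (hb : |b| ≤ B + 1)
    (hv1 : ∀ y, v y ≤ 1)
    (hvs : ∀ y, v y ≠ 0 → |y| ≤ B)
    (hg1 : ∀ y, b + 1 < y → g y = v (y - 1))
    (hg2 : ∀ y, y < b - 1 → g y = v (y + 1))
    (hg3 : ∀ y, |y - b| ≤ 1 → g y = 1) :
    2 + ∑ y ∈ Icc (-B) B, v y ≤ ∑ y ∈ Ioc (-B - 3) (B + 2), g y := by
  have hb' := abs_le.mp hb
  have e0 : ∑ y ∈ Ioc (-B - 3) (B + 2), g y =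
      (∑ y ∈ Ioc (-B - 3) (b - 2), g y) + (∑ y ∈ Ioc (b - 2) (b + 1), g y)
        + ∑ y ∈ Ioc (b + 1) (B + 2), g y := by
    rw [sum_Ioc_split g (b := b - 2) (by omega) (by omega),
      sum_Ioc_split g (a := b - 2) (b := b + 1) (by omega) (by omega)]
    ring
  have e1 : ∑ y ∈ Ioc (-B - 3) (b - 2), g y = ∑ y ∈ Ioc (-B - 2) (b - 1), v y := by
    rw [Finset.sum_congr rfl (fun y hy => hg2 y (by simp only [Finset.mem_Ioc] at hy; omega)),
      sum_shift v (-B - 3) (b - 2)]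
    congr 1 <;> ring
  have e2 : ∑ y ∈ Ioc (b - 2) (b + 1), g y = 3 := by
    rw [Finset.sum_congr rfl
        (fun y hy => hg3 y (by simp only [Finset.mem_Ioc] at hy; rw [abs_le]; omega)),
      Finset.sum_const, Int.card_Ioc, show b + 1 - (b - 2) = 3 by ring,
      show (3:ℤ).toNat = 3 from rfl]
    norm_num
  have e3 : ∑ y ∈ Ioc (b + 1) (B + 2), g y = ∑ y ∈ Ioc b (B + 1), v y := by
    rw [Finset.sum_congr rfl (fun y hy => hg1 y (by simp only [Finset.mem_Ioc] at hy; omega)),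
      sum_shift' v (b + 1) (B + 2)]
    congr 1 <;> ring
  have e4 : ∑ y ∈ Ioc (-B - 2) (B + 1), v y =
      (∑ y ∈ Ioc (-B - 2) (b - 1), v y) + (v b + ∑ y ∈ Ioc b (B + 1), v y) := by
    rw [sum_Ioc_split v (b := b - 1) (by omega) (by omega), sum_Ioc_head v (by omega)]
  have e5 : ∑ y ∈ Ioc (-B - 2) (B + 1), v y = ∑ y ∈ Icc (-B) B, v y :=
    sum_Ioc_window v hvs (by omega) (by omega)
  have := hv1 b
  rw [e0, e1, e2, e3]
  linarith

private lemma side_sum (u v g : ℤ → ℝ) (B b : ℤ)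
    (hb : |b| ≤ B + 1)
    (hu0 : ∀ y, 0 ≤ u y)
    (hus : ∀ y, u y ≠ 0 → |y| ≤ B) (hvs : ∀ y, v y ≠ 0 → |y| ≤ B)
    (hg1 : ∀ y, b < y → g y = (u y + v (y - 1)) / 2)
    (hg2 : ∀ y, y < b → g y = (u y + v (y + 1)) / 2)
    (hg3 : (u b - v b) / 2 ≤ g b) :
    ((∑ y ∈ Icc (-B) B, u y) + ∑ y ∈ Icc (-B) B, v y) / 2
      ≤ ∑ y ∈ Ioc (-B - 3) (B + 2), g y := by
  have hb' := abs_le.mp hb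
  have e0 : ∑ y ∈ Ioc (-B - 3) (B + 2), g y =
      (∑ y ∈ Ioc (-B - 3) (b - 1), g y) + g b + ∑ y ∈ Ioc b (B + 2), g y := by
    rw [sum_Ioc_split g (b := b - 1) (by omega) (by omega),
      sum_Ioc_head g (b := b) (by omega)]
    ring
  have e1 : ∑ y ∈ Ioc (-B - 3) (b - 1), g y =
      ((∑ y ∈ Ioc (-B - 3) (b - 1), u y) + ∑ y ∈ Ioc (-B - 2) b, v y) / 2 := by
    rw [Finset.sum_congr rfl (fun y hy => hg2 y (by simp only [Finset.mem_Ioc] at hy; omega)),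
      ← Finset.sum_div, Finset.sum_add_distrib, sum_shift v (-B - 3) (b - 1)]
    congr 2 <;> ring
  have e2 : ∑ y ∈ Ioc b (B + 2), g y =
      ((∑ y ∈ Ioc b (B + 2), u y) + ∑ y ∈ Ioc (b - 1) (B + 1), v y) / 2 := by
    rw [Finset.sum_congr rfl (fun y hy => hg1 y (by simp only [Finset.mem_Ioc] at hy; omega)),
      ← Finset.sum_div, Finset.sum_add_distrib, sum_shift' v b (B + 2)]
    congr 2 <;> ring
  have e3 : ∑ y ∈ Ioc (-B - 3) (B + 2), u y =
      (∑ y ∈ Ioc (-B - 3) (b - 1), u y) + (u b + ∑ y ∈ Ioc b (B + 2), u y) := by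
    rw [sum_Ioc_split u (b := b - 1) (by omega) (by omega), sum_Ioc_head u (by omega)]
  have e4 : ∑ y ∈ Ioc (-B - 2) (B + 1), v y =
      (∑ y ∈ Ioc (-B - 2) (b - 1), v y) + (v b + ∑ y ∈ Ioc b (B + 1), v y) := by
    rw [sum_Ioc_split v (b := b - 1) (by omega) (by omega), sum_Ioc_head v (by omega)]
  have e5 : ∑ y ∈ Ioc (-B - 2) b, v y =
      (∑ y ∈ Ioc (-B - 2) (b - 1), v y) + v b := by
    rw [sum_Ioc_split v (b := b - 1) (by omega) (by omega), sum_Ioc_head v (by omega),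
      Finset.Ioc_self, Finset.sum_empty]
    ring
  have e6 : ∑ y ∈ Ioc (b - 1) (B + 1), v y = v b + ∑ y ∈ Ioc b (B + 1), v y :=
    sum_Ioc_head v (by omega)
  have w1 : ∑ y ∈ Ioc (-B - 3) (B + 2), u y = ∑ y ∈ Icc (-B) B, u y :=
    sum_Ioc_window u hus (by omega) (by omega)
  have w2 : ∑ y ∈ Ioc (-B - 2) (B + 1), v y = ∑ y ∈ Icc (-B) B, v y :=
    sum_Ioc_window v hvs (by omega) (by omega)
  have hub := hu0 b
  rw [e0, e1, e2]
  linarith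

private lemma abs_sign_le_s8 (z : ℤ) : |Int.sign z| ≤ 1 := by
  rcases lt_trichotomy z 0 with h | h | h
  · rw [Int.sign_eq_neg_one_iff_neg.mpr h]; norm_num
  · rw [h, Int.sign_zero]; norm_num
  · rw [Int.sign_eq_one_iff_pos.mpr h]; norm_num

private lemma pAux_mem (S : ℕ → ℤ × ℤ) (M : ℕ) :
    ∀ j q, 0 ≤ pAux S M j q ∧ pAux S M j q ≤ 1 := by
  intro j
  induction j with
  | zero => intro q; simp only [pAux]; split <;> norm_num
  | succ j ih =>
    intro q
    simp only [pAux, pstep]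
    split
    · norm_num
    · split
      · obtain ⟨h1, h2⟩ := ih (q.1 + Int.sign ((S (M - (j+1))).1 - q.1), q.2)
        obtain ⟨h3, h4⟩ := ih (q.1, q.2 + Int.sign ((S (M - (j+1))).2 - q.2))
        constructor <;> [linarith; linarith]
      · split
        · exact ih _
        · exact ih _

private lemma center_bound (S : ℕ → ℤ × ℤ) (M : ℕ) (hS : IsStrategy S M) :
    ∀ d, d ≤ M - 1 → |(S (M - d)).1| + |(S (M - d)).2| ≤ (d : ℤ) := by
  intro d
  induction d with
  | zero => intro _; simp [hS.1]
  | succ d ih =>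
    intro hd
    have h1 : 1 ≤ M - (d + 1) := by omega
    have h2 : M - (d + 1) < M := by omega
    have h3 : M - (d + 1) + 1 = M - d := by omega
    have hstep := hS.2 (M - (d + 1)) h1 h2
    rw [h3] at hstep
    have hih := ih (by omega)
    have a1 := abs_sub_abs_le_abs_sub (S (M - (d + 1))).1 (S (M - d)).1
    have a2 := abs_sub_abs_le_abs_sub (S (M - (d + 1))).2 (S (M - d)).2
    rw [abs_sub_comm] at a1 a2
    push_cast
    linarith

private lemma pAux_supp (S : ℕ → ℤ × ℤ) (M : ℕ) (hS : IsStrategy S M) :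
    ∀ j, j ≤ M - 1 → ∀ x y : ℤ, pAux S M j (x, y) ≠ 0 → |x| + |y| ≤ 2 * (j : ℤ) + 1 := by
  intro j
  induction j with
  | zero =>
    intro _ x y h
    simp only [pAux, hS.1] at h
    split at h
    · next hc =>
      simp only [show ((0,0) : ℤ × ℤ).1 = 0 from rfl, show ((0,0) : ℤ × ℤ).2 = 0 from rfl,
        sub_zero] at hc
      push_cast
      linarith
    · exact absurd rfl h
  | succ j ih =>
    intro hj x y h
    have hj' : j ≤ M - 1 := by omega
    have hc := center_bound S M hS (j + 1) hj
    set a := (S (M - (j + 1))).1 with ha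
    set b := (S (M - (j + 1))).2 with hb
    have key : ∀ s t : ℤ, |s| ≤ 1 → |t| ≤ 1 →
        pAux S M j (x + s, y + t) ≠ 0 → |x| + |y| ≤ 2 * ((j : ℤ) + 1) + 1 := by
      intro s t hs ht h'
      have hih := ih hj' (x + s) (y + t) h'
      have u1 : |x| - |x + s| ≤ |x - (x + s)| := abs_sub_abs_le_abs_sub x (x + s)
      have u2 : |y| - |y + t| ≤ |y - (y + t)| := abs_sub_abs_le_abs_sub y (y + t)
      rw [show x - (x + s) = -s by ring, abs_neg] at u1
      rw [show y - (y + t) = -t by ring, abs_neg] at u2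
      linarith
    simp only [pAux, pstep] at h
    push_cast
    split at h
    · next hcond =>
      have t1 := abs_sub_abs_le_abs_sub x a
      have t2 := abs_sub_abs_le_abs_sub y b
      push_cast at hc
      simp only [← ha, ← hb] at hcond
      linarith
    · split at h
      · have : pAux S M j (x + Int.sign (a - x), y) ≠ 0 ∨
            pAux S M j (x, y + Int.sign (b - y)) ≠ 0 := by
          by_contra hcon
          push_neg at hcon
          rw [hcon.1, hcon.2] at h
          norm_num at h
        rcases this with h' | h'
        · have := key (Int.sign (a - x)) 0 (abs_sign_le_s8 _) (by norm_num)
            (by simpa using h')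
          push_cast at this; linarith
        · have := key 0 (Int.sign (b - y)) (by norm_num) (abs_sign_le_s8 _)
            (by simpa using h')
          push_cast at this; linarith
      · split at h
        · have := key 0 (Int.sign (b - y)) (by norm_num) (abs_sign_le_s8 _) (by simpa using h)
          push_cast at this; linarith
        · have := key (Int.sign (a - x)) 0 (abs_sign_le_s8 _) (by norm_num) (by simpa using h)
          push_cast at this; linarith

private lemma pstep_apply (a b : ℤ) (f : ℤ × ℤ → ℝ) (x y : ℤ) :
    pstep (a, b) f (x, y) =
      if |x - a| + |y - b| ≤ 1 then 1
      else if x ≠ a ∧ y ≠ b then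
        (f (x + Int.sign (a - x), y) + f (x, y + Int.sign (b - y))) / 2
      else if x = a then f (x, y + Int.sign (b - y))
      else f (x + Int.sign (a - x), y) := rfl

private lemma zAux_le (S : ℕ → ℤ × ℤ) (M : ℕ) (hS : IsStrategy S M) :
    ∀ j, j ≤ M - 1 → ∀ x : ℤ,
      zAux (fun k => (S k).1) M j x ≤
        ∑ y ∈ Icc (-(2 * (j : ℤ) + 1)) (2 * (j : ℤ) + 1), pAux S M j (x, y) := by
  intro j
  induction j with
  | zero =>
    intro _ x
    have hI : Icc (-(2 * ((0 : ℕ) : ℤ) + 1)) (2 * ((0 : ℕ) : ℤ) + 1)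
        = ({-1, 0, 1} : Finset ℤ) := by
      ext y
      simp only [Finset.mem_Icc, Finset.mem_insert, Finset.mem_singleton, Nat.cast_zero]
      omega
    rw [hI, Finset.sum_insert (by decide), Finset.sum_insert (by decide),
      Finset.sum_singleton]
    have hp : ∀ y : ℤ, pAux S M 0 (x, y) = if |x| + |y| ≤ 1 then 1 else 0 := by
      intro y
      simp only [pAux, hS.1]
      norm_num
    rw [hp, hp, hp]
    simp only [zAux]
    by_cases h0 : x = 0
    · subst h0; norm_num
    · rw [if_neg h0]
      by_cases h1 : x = 1 ∨ x = -1
      · rw [if_pos h1]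
        rcases h1 with h1 | h1 <;> subst h1 <;> norm_num
      · rw [if_neg h1]
        push_neg at h1
        have habs : 2 ≤ |x| := by
          rcases abs_cases x with ⟨h, _⟩ | ⟨h, _⟩ <;> omega
        have e : ∀ z : ℤ, (if |x| + |z| ≤ 1 then (1:ℝ) else 0) = 0 := by
          intro z
          rw [if_neg (by have := abs_nonneg z; omega)]
        rw [e, e, e]
        norm_num
  | succ j ih =>
    intro hj x
    have hj' : j ≤ M - 1 := by omega
    obtain ⟨a, b, hab⟩ : ∃ a b, S (M - (j + 1)) = (a, b) := ⟨_, _, rfl⟩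
    have hcb : |a| + |b| ≤ (j : ℤ) + 1 := by
      have h := center_bound S M hS (j + 1) hj
      rw [hab] at h
      push_cast at h
      exact h
    have hcb' : |a| ≤ (j : ℤ) + 1 ∧ |b| ≤ (j : ℤ) + 1 := by
      constructor <;> [linarith [abs_nonneg b]; linarith [abs_nonneg a]]
    have hj0 : (0 : ℤ) ≤ (j : ℤ) := Int.natCast_nonneg j
    have hB1 : |b| ≤ (2 * (j : ℤ) + 1) + 1 := by linarith [hcb'.2]
    have hsupp : ∀ x' y : ℤ, pAux S M j (x', y) ≠ 0 → |y| ≤ 2 * (j : ℤ) + 1 := by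
      intro x' y h
      have h2 := pAux_supp S M hS j hj' x' y h
      have h3 := abs_nonneg x'
      linarith
    have hmem := pAux_mem S M j
    have hstep : ∀ y : ℤ, pAux S M (j + 1) (x, y) = pstep (a, b) (pAux S M j) (x, y) := by
      intro y
      simp only [pAux, hab]
    push_cast
    have hwin : Icc (-(2 * ((j : ℤ) + 1) + 1)) (2 * ((j : ℤ) + 1) + 1)
        = Ioc (-(2 * (j : ℤ) + 1) - 3) (2 * (j : ℤ) + 1 + 2) := by
      ext y
      simp only [Finset.mem_Icc, Finset.mem_Ioc]
      omega
    rw [hwin]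
    rcases lt_trichotomy a x with hxa | hxa | hxa
    · -- a < x : use the row x - 1
      have hz : zAux (fun k => (S k).1) M (j + 1) x
          = (zAux (fun k => (S k).1) M j (x - 1) + zAux (fun k => (S k).1) M j x) / 2 := by
        simp only [zAux]
        simp only [hab]
        rw [if_neg (by omega), if_pos hxa]
      refine le_trans ?_ (side_sum (fun y => pAux S M j (x - 1, y)) (fun y => pAux S M j (x, y))
        (fun y => pAux S M (j + 1) (x, y)) (2 * (j : ℤ) + 1) b hB1
        (fun y => (hmem _).1) (hsupp (x - 1)) (hsupp x) ?_ ?_ ?_)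
      · rw [hz]
        have i1 := ih hj' (x - 1)
        have i2 := ih hj' x
        linarith
      · intro y hy
        simp only [hstep]
        rw [pstep_apply]
        rw [if_neg (by
          rw [abs_of_pos (show (0:ℤ) < x - a by omega),
            abs_of_pos (show (0:ℤ) < y - b by omega)]
          omega)]
        rw [if_pos ⟨by omega, by omega⟩,
          Int.sign_eq_neg_one_iff_neg.mpr (show a - x < 0 by omega),
          Int.sign_eq_neg_one_iff_neg.mpr (show b - y < 0 by omega),
          show x + (-1 : ℤ) = x - 1 by ring, show y + (-1 : ℤ) = y - 1 by ring]
      · intro y hy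
        simp only [hstep]
        rw [pstep_apply]
        rw [if_neg (by
          rw [abs_of_pos (show (0:ℤ) < x - a by omega),
            abs_of_neg (show y - b < 0 by omega)]
          omega)]
        rw [if_pos ⟨by omega, by omega⟩,
          Int.sign_eq_neg_one_iff_neg.mpr (show a - x < 0 by omega),
          Int.sign_eq_one_iff_pos.mpr (show 0 < b - y by omega),
          show x + (-1 : ℤ) = x - 1 by ring]
      · simp only [hstep]
        rw [pstep_apply]
        by_cases hx1 : x = a + 1
        · rw [if_pos (by
            rw [sub_self, abs_zero, abs_of_pos (show (0:ℤ) < x - a by omega)]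
            omega)]
          have m1 := (hmem (x - 1, b)).2
          have m2 := (hmem (x, b)).1
          linarith
        · rw [if_neg (by
            rw [sub_self, abs_zero, abs_of_pos (show (0:ℤ) < x - a by omega)]
            omega)]
          rw [if_neg (fun hcon => hcon.2 rfl), if_neg (by omega),
            Int.sign_eq_neg_one_iff_neg.mpr (show a - x < 0 by omega),
            show x + (-1 : ℤ) = x - 1 by ring]
          have m1 := (hmem (x - 1, b)).1
          have m2 := (hmem (x, b)).1
          linarith
    · -- x = a : center case
      have hz : zAux (fun k => (S k).1) M (j + 1) x
          = zAux (fun k => (S k).1) M j x + 2 := by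
        simp only [zAux]
        simp only [hab]
        rw [if_pos hxa.symm]
      refine le_trans ?_ (center_sum (fun y => pAux S M j (x, y))
        (fun y => pAux S M (j + 1) (x, y)) (2 * (j : ℤ) + 1) b hB1
        (fun y => (hmem _).2) (hsupp x) ?_ ?_ ?_)
      · rw [hz]
        have i2 := ih hj' x
        linarith
      · intro y hy
        simp only [hstep]
        rw [pstep_apply]
        rw [if_neg (by
          rw [← hxa, sub_self, abs_zero, abs_of_pos (show (0:ℤ) < y - b by omega)]
          omega)]
        rw [if_neg (fun hcon => hcon.1 hxa.symm), if_pos hxa.symm,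
          Int.sign_eq_neg_one_iff_neg.mpr (show b - y < 0 by omega),
          show y + (-1 : ℤ) = y - 1 by ring]
      · intro y hy
        simp only [hstep]
        rw [pstep_apply]
        rw [if_neg (by
          rw [← hxa, sub_self, abs_zero, abs_of_neg (show y - b < 0 by omega)]
          omega)]
        rw [if_neg (fun hcon => hcon.1 hxa.symm), if_pos hxa.symm,
          Int.sign_eq_one_iff_pos.mpr (show 0 < b - y by omega)]
      · intro y hy
        simp only [hstep]
        rw [pstep_apply, if_pos (by rw [← hxa, sub_self, abs_zero]; omega)]
    · -- x < a : use the row x + 1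
      have hz : zAux (fun k => (S k).1) M (j + 1) x
          = (zAux (fun k => (S k).1) M j (x + 1) + zAux (fun k => (S k).1) M j x) / 2 := by
        simp only [zAux]
        simp only [hab]
        rw [if_neg (by omega), if_neg (by omega)]
      refine le_trans ?_ (side_sum (fun y => pAux S M j (x + 1, y)) (fun y => pAux S M j (x, y))
        (fun y => pAux S M (j + 1) (x, y)) (2 * (j : ℤ) + 1) b hB1
        (fun y => (hmem _).1) (hsupp (x + 1)) (hsupp x) ?_ ?_ ?_)
      · rw [hz]
        have i1 := ih hj' (x + 1)
        have i2 := ih hj' x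
        linarith
      · intro y hy
        simp only [hstep]
        rw [pstep_apply]
        rw [if_neg (by
          rw [abs_of_neg (show x - a < 0 by omega),
            abs_of_pos (show (0:ℤ) < y - b by omega)]
          omega)]
        rw [if_pos ⟨by omega, by omega⟩,
          Int.sign_eq_one_iff_pos.mpr (show 0 < a - x by omega),
          Int.sign_eq_neg_one_iff_neg.mpr (show b - y < 0 by omega),
          show y + (-1 : ℤ) = y - 1 by ring]
      · intro y hy
        simp only [hstep]
        rw [pstep_apply]
        rw [if_neg (by
          rw [abs_of_neg (show x - a < 0 by omega),
            abs_of_neg (show y - b < 0 by omega)]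
          omega)]
        rw [if_pos ⟨by omega, by omega⟩,
          Int.sign_eq_one_iff_pos.mpr (show 0 < a - x by omega),
          Int.sign_eq_one_iff_pos.mpr (show 0 < b - y by omega)]
      · simp only [hstep]
        rw [pstep_apply]
        by_cases hx1 : x = a - 1
        · rw [if_pos (by
            rw [sub_self, abs_zero, abs_of_neg (show x - a < 0 by omega)]
            omega)]
          have m1 := (hmem (x + 1, b)).2
          have m2 := (hmem (x, b)).1
          linarith
        · rw [if_neg (by
            rw [sub_self, abs_zero, abs_of_neg (show x - a < 0 by omega)]
            omega)]
          rw [if_neg (fun hcon => hcon.2 rfl), if_neg (by omega),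
            Int.sign_eq_one_iff_pos.mpr (show 0 < a - x by omega)]
          have m1 := (hmem (x + 1, b)).1
          have m2 := (hmem (x, b)).1
          linarith

/-- The `x`-projection of `p_S^i` dominates `z^i`:
`q_S^i(x) = ∑_y p_S^i(x,y) ≥ z^i(x)` for every `1 ≤ i ≤ M` and every `x ∈ ℤ`. -/
theorem stmt_8 (n : ℕ) (hn : 8 ≤ n) (M : ℕ) (hM : M = n / 4)
    (S : ℕ → ℤ × ℤ) (hS : IsStrategy S M)
    (i : ℕ) (hi1 : 1 ≤ i) (hi2 : i ≤ M) (x : ℤ) :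
    zS S M i x ≤ ∑ᶠ y : ℤ, pS S M i (x, y) := by
  have hM2 : 2 ≤ M := by omega
  have hj : M - i ≤ M - 1 := by omega
  have hmain := zAux_le S M hS (M - i) hj x
  have hsum : ∑ᶠ y : ℤ, pS S M i (x, y)
      = ∑ y ∈ Icc (-(2 * ((M - i : ℕ) : ℤ) + 1)) (2 * ((M - i : ℕ) : ℤ) + 1),
          pAux S M (M - i) (x, y) := by
    refine finsum_eq_sum_of_support_subset _ ?_
    intro y hy
    have h := pAux_supp S M hS (M - i) hj x y hy
    simp only [Finset.coe_Icc, Set.mem_Icc]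
    have hx0 := abs_nonneg x
    have hy2 : |y| ≤ 2 * ((M - i : ℕ) : ℤ) + 1 := by linarith
    exact abs_le.mp hy2
  rw [hsum]
  exact hmain
end
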